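/- arXiv:1311.1873 — 4 statements merged into one kernel-verified Lean document; each statement's English description precedes it below -/
import Mathlib

section
/- Under the AsySCD iteration, suppose ρ > 1 and define ψ = 1 + 2τρ^τ L_res/(√n · L_max). If the steplength parameter γ > 0 satisfies the three bounds γ ≤ 1/ψ, γ ≤ (ρ − 1)√n · L_max/(2ρ^{τ+1} L_res), and γ ≤ (ρ − 1)√n · L_max/(L_res ρ^τ (2 + L_res/(√n · L_max))), then for every j ≥ 0, ρ^{-1} E(‖∇f(x_j)‖²) ≤ E(‖∇f(x_{j+1})‖²) ≤ ρ · E(‖∇f(x_j)‖²). -/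
open MeasureTheory ProbabilityTheory Real ENNReal

noncomputable def asyHist {n : ℕ} (f : EuclideanSpace ℝ (Fin n) → ℝ) (c : ℝ) (k : ℕ → ℕ)
    (x0 : EuclideanSpace ℝ (Fin n)) : ℕ → (ℕ → Fin n) → ℕ → EuclideanSpace ℝ (Fin n)
  | 0, _, _ => x0
  | j+1, a, m =>
    if m ≤ j then asyHist f c k x0 j a m
    else asyHist f c k x0 j a j -
      EuclideanSpace.single (a j) (c * gradient f (asyHist f c k x0 j a (k j)) (a j))

noncomputable def asyX {n : ℕ} (f : EuclideanSpace ℝ (Fin n) → ℝ) (c : ℝ) (k : ℕ → ℕ)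
    (x0 : EuclideanSpace ℝ (Fin n)) (j : ℕ) (a : ℕ → Fin n) : EuclideanSpace ℝ (Fin n) :=
  asyHist f c k x0 j a j

lemma asyHist_stable {n : ℕ} (f : EuclideanSpace ℝ (Fin n) → ℝ) (c : ℝ) (k : ℕ → ℕ)
    (x0 : EuclideanSpace ℝ (Fin n)) :
    ∀ (j m : ℕ), m ≤ j → ∀ a, asyHist f c k x0 j a m = asyHist f c k x0 m a m := by
  intro j
  induction j with
  | zero => intro m hm a; have : m = 0 := Nat.le_zero.mp hm; subst this; rfl
  | succ j ih =>
    intro m hm a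
    by_cases h : m ≤ j
    · simp only [asyHist, if_pos h]; exact ih m h a
    · have : m = j + 1 := by omega
      subst this; rfl

lemma asyHist_congr {n : ℕ} (f : EuclideanSpace ℝ (Fin n) → ℝ) (c : ℝ) (k : ℕ → ℕ)
    (x0 : EuclideanSpace ℝ (Fin n)) :
    ∀ (j : ℕ) (a b : ℕ → Fin n), (∀ l, l < j → a l = b l) → ∀ m,
      asyHist f c k x0 j a m = asyHist f c k x0 j b m := by
  intro j
  induction j with
  | zero => intros; rfl
  | succ j ih =>
    intro a b h m
    have hab : ∀ l, l < j → a l = b l := fun l hl => h l (Nat.lt_succ_of_lt hl)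
    simp only [asyHist]
    rw [ih a b hab m, ih a b hab j, ih a b hab (k j), h j (Nat.lt_succ_self j)]

lemma asyX_succ {n : ℕ} (f : EuclideanSpace ℝ (Fin n) → ℝ) (c : ℝ) (k : ℕ → ℕ)
    (x0 : EuclideanSpace ℝ (Fin n)) {j : ℕ} (hkj : k j ≤ j) (a : ℕ → Fin n) :
    asyX f c k x0 (j+1) a = asyX f c k x0 j a -
      EuclideanSpace.single (a j) (c * gradient f (asyX f c k x0 (k j) a) (a j)) := by
  show asyHist f c k x0 (j+1) a (j+1) = _
  simp only [asyHist]
  rw [if_neg (by omega), asyHist_stable f c k x0 j (k j) hkj a]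
  rfl

lemma asyX_congr {n : ℕ} (f : EuclideanSpace ℝ (Fin n) → ℝ) (c : ℝ) (k : ℕ → ℕ)
    (x0 : EuclideanSpace ℝ (Fin n)) {j : ℕ} {a b : ℕ → Fin n} (h : ∀ l, l < j → a l = b l) :
    asyX f c k x0 j a = asyX f c k x0 j b :=
  asyHist_congr f c k x0 j a b h j

lemma exp_comp_fintype {Ω : Type} [MeasureSpace Ω] [IsProbabilityMeasure (ℙ : Measure Ω)]
    {β : Type*} [Fintype β] [MeasurableSpace β] [MeasurableSingletonClass β] [DecidableEq β]
    (W : Ω → β) (hW : Measurable W) (φ : β → ℝ) :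
    ∫ ω, φ (W ω) = ∑ b, (ℙ (W ⁻¹' {b})).toReal * φ b := by
  have hpt : ∀ ω, φ (W ω) = ∑ b, Set.indicator (W ⁻¹' {b}) (fun _ => φ b) ω := by
    intro ω
    have h1 : ∀ b : β, Set.indicator (W ⁻¹' {b}) (fun _ => φ b) ω
        = if W ω = b then φ b else 0 := by
      intro b
      by_cases hb : W ω = b <;> simp [Set.indicator_apply, hb]
    simp_rw [h1]
    rw [Finset.sum_ite_eq Finset.univ (W ω) φ, if_pos (Finset.mem_univ _)]
  rw [integral_congr_ae (Filter.Eventually.of_forall hpt)]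
  rw [integral_finset_sum _ (fun b _ =>
    (integrable_const (φ b)).indicator (hW (measurableSet_singleton b)))]
  refine Finset.sum_congr rfl fun b _ => ?_
  rw [integral_indicator_const (φ b) (hW (measurableSet_singleton b)), smul_eq_mul, mul_comm]
  exact mul_comm _ _

lemma sq_bound_up {G G' D : ℝ} (hG : 0 ≤ G) (hD : 0 ≤ D) (hG' : 0 ≤ G')
    (h : |G' - G| ≤ D) : G' ^ 2 ≤ G ^ 2 + 2 * G * D + D ^ 2 := by
  have h2 := abs_le.mp h
  nlinarith [h2.1, h2.2]

lemma sq_bound_lo {G G' D : ℝ} (hG : 0 ≤ G) (hD : 0 ≤ D) (hG' : 0 ≤ G')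
    (h : |G' - G| ≤ D) : G ^ 2 - 2 * G * D ≤ G' ^ 2 := by
  have h2 := abs_le.mp h
  nlinarith [mul_nonneg hG (by linarith [h2.1] : (0:ℝ) ≤ G' - G + D), sq_nonneg (G' - G)]

lemma sum_sq_eq_norm {n : ℕ} (v : EuclideanSpace ℝ (Fin n)) :
    ∑ i, (v i) ^ 2 = ‖v‖ ^ 2 := by
  rw [EuclideanSpace.norm_eq, Real.sq_sqrt (by positivity)]
  simp [Real.norm_eq_abs, sq_abs]

lemma sum_abs_le_sqrt_norm {n : ℕ} (v : EuclideanSpace ℝ (Fin n)) :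
    ∑ i, |v i| ≤ Real.sqrt n * ‖v‖ := by
  have h1 : (∑ i, |v i|) ^ 2 ≤ (n : ℝ) * ∑ i, |v i| ^ 2 := by
    simpa using sq_sum_le_card_mul_sum_sq (s := Finset.univ) (f := fun i : Fin n => |v i|)
  have h2 : ∑ i, |v i| ^ 2 = ‖v‖ ^ 2 := by
    simp_rw [sq_abs]; exact sum_sq_eq_norm v
  calc ∑ i, |v i| = Real.sqrt ((∑ i, |v i|) ^ 2) := (Real.sqrt_sq (by positivity)).symm
    _ ≤ Real.sqrt ((n : ℝ) * ‖v‖ ^ 2) := Real.sqrt_le_sqrt (by rw [← h2]; exact h1)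
    _ = Real.sqrt n * ‖v‖ := by
        rw [Real.sqrt_mul (by positivity), Real.sqrt_sq (norm_nonneg v)]

lemma euclid_single_neg {n : ℕ} (i : Fin n) (s : ℝ) :
    EuclideanSpace.single i (-s) = -EuclideanSpace.single i s := by
  ext l
  simp only [EuclideanSpace.single_apply, PiLp.neg_apply]
  split_ifs <;> simp

lemma scalar_e1 (s S1 C P : ℝ) (hs : s ≠ 0) :
    (s * s)⁻¹ * ((s * s) * S1 - s * (2 * C) * (P * S1)) = S1 * (1 - 2 * (C / s * P)) := by
  field_simp

lemma scalar_e2 (s S1 C P : ℝ) (hs : s ≠ 0) :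
    (s * s)⁻¹ * ((s * s) * S1 + s * (2 * C) * (P * S1) + C ^ 2 * (P * S1))
      = S1 * (1 + 2 * (C / s * P) + (C / s) ^ 2 * P) := by
  field_simp

set_option maxHeartbeats 1600000 in
theorem asyscd_gradient_ratio_bounds
    {n : ℕ} (hn : 0 < n)
    (f : EuclideanSpace ℝ (Fin n) → ℝ)
    (hf_smooth : ContDiff ℝ 1 f)
    (hf_conv : ConvexOn ℝ Set.univ f)
    (S : Set (EuclideanSpace ℝ (Fin n)))
    (hS : S = {z | ∀ y, f z ≤ f y}) (hS_ne : S.Nonempty)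
    (fstar : ℝ) (hfstar : ∀ z ∈ S, f z = fstar)
    (Lres Lmax : ℝ) (hLres_pos : 0 < Lres) (hLmax_pos : 0 < Lmax)
    (hLres : ∀ (z : EuclideanSpace ℝ (Fin n)) (i : Fin n) (t : ℝ),
      ‖gradient f z - gradient f (z + EuclideanSpace.single i t)‖ ≤ Lres * |t|)
    (Li : Fin n → ℝ)
    (hLi : ∀ (z : EuclideanSpace ℝ (Fin n)) (i : Fin n) (t : ℝ),
      |gradient f z i - gradient f (z + EuclideanSpace.single i t) i| ≤ Li i * |t|)
    (hLmax : IsGreatest (Set.range Li) Lmax)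
    {Ω : Type} [MeasureSpace Ω] [IsProbabilityMeasure (ℙ : Measure Ω)]
    (idx : ℕ → Ω → Fin n) (hidx_meas : ∀ j, Measurable (idx j))
    (hidx_unif : ∀ j i, ℙ {ω | idx j ω = i} = (n : ℝ≥0∞)⁻¹)
    (hidx_indep : iIndepFun idx ℙ)
    (τ : ℕ) (k : ℕ → ℕ) (hk : ∀ j, k j ≤ j ∧ j ≤ k j + τ)
    (γ : ℝ) (hγ_pos : 0 < γ)
    (x0 : EuclideanSpace ℝ (Fin n))
    (x : ℕ → Ω → EuclideanSpace ℝ (Fin n))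
    (hx0 : ∀ ω, x 0 ω = x0)
    (hxiter : ∀ j ω, x (j+1) ω =
      x j ω - EuclideanSpace.single (idx j ω) (γ / Lmax * gradient f (x (k j) ω) (idx j ω)))
    (ρ : ℝ) (hρ : 1 < ρ)
    (ψ : ℝ) (hψ : ψ = 1 + 2 * τ * ρ ^ τ * Lres / (Real.sqrt n * Lmax))
    (hγ1 : γ ≤ 1 / ψ)
    (hγ2 : γ ≤ (ρ - 1) * Real.sqrt n * Lmax / (2 * ρ ^ (τ + 1) * Lres))
    (hγ3 : γ ≤ (ρ - 1) * Real.sqrt n * Lmax / (Lres * ρ ^ τ * (2 + Lres / (Real.sqrt n * Lmax)))) :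
    ∀ j : ℕ,
      ρ⁻¹ * (∫ ω, ‖gradient f (x j ω)‖ ^ 2) ≤ (∫ ω, ‖gradient f (x (j+1) ω)‖ ^ 2) ∧
      (∫ ω, ‖gradient f (x (j+1) ω)‖ ^ 2) ≤ ρ * (∫ ω, ‖gradient f (x j ω)‖ ^ 2) := by
  classical
  have hn' : (0:ℝ) < n := by exact_mod_cast hn
  have hn0 : (n:ℝ) ≠ 0 := ne_of_gt hn'
  have hs : 0 < Real.sqrt n := Real.sqrt_pos.mpr hn'
  have hss : Real.sqrt n * Real.sqrt n = (n:ℝ) := Real.mul_self_sqrt (le_of_lt hn')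
  have hρ0 : (0:ℝ) < ρ := lt_trans one_pos hρ
  have hρτ : (1:ℝ) ≤ ρ ^ τ := one_le_pow₀ hρ.le
  have hρτ0 : (0:ℝ) < ρ ^ τ := pow_pos hρ0 τ
  have hcpos : 0 < γ / Lmax := div_pos hγ_pos hLmax_pos
  set C : ℝ := γ / Lmax * Lres with hCdef
  have hCpos : 0 < C := mul_pos hcpos hLres_pos
  set A : ℝ := C / Real.sqrt n * ρ ^ τ with hAdef
  have hA0 : 0 ≤ A := le_of_lt (mul_pos (div_pos hCpos hs) hρτ0)
  have hA : A * (2 * ρ) ≤ ρ - 1 := by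
    have hden : (0:ℝ) < 2 * ρ ^ (τ+1) * Lres := by positivity
    rw [le_div_iff₀ hden] at hγ2
    have h2 : A * (2 * ρ) = γ * (2 * ρ ^ (τ+1) * Lres) / (Lmax * Real.sqrt n) := by
      rw [hAdef, hCdef, pow_succ]; field_simp
    rw [h2, div_le_iff₀ (by positivity)]
    calc γ * (2 * ρ ^ (τ+1) * Lres) ≤ (ρ - 1) * Real.sqrt n * Lmax := hγ2
      _ = (ρ - 1) * (Lmax * Real.sqrt n) := by ring
  set E : ℕ → ℝ := fun m => ∫ ω, ‖gradient f (x m ω)‖ ^ 2 with hEdef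
  have hxX : ∀ m ω, x m ω = asyX f (γ / Lmax) k x0 m (fun l => idx l ω) := by
    intro m
    induction m using Nat.strong_induction_on with
    | _ m IHm =>
      intro ω
      cases m with
      | zero => rw [hx0]; rfl
      | succ m' =>
        rw [hxiter m' ω, asyX_succ f (γ / Lmax) k x0 (hk m').1,
          IHm m' (Nat.lt_succ_self m') ω, IHm (k m') (Nat.lt_succ_of_le (hk m').1) ω]
  intro j
  induction j using Nat.strong_induction_on with
  | _ j IH =>
  show ρ⁻¹ * E j ≤ E (j+1) ∧ E (j+1) ≤ ρ * E j
  have IH' : ∀ m, m < j → (ρ⁻¹ * E m ≤ E (m+1) ∧ E (m+1) ≤ ρ * E m) := IH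
  have hE_nonneg : ∀ m, 0 ≤ E m := fun m => integral_nonneg fun ω => by positivity
  have chain : ∀ d m, m + d = j → E m ≤ ρ ^ d * E j := by
    intro d
    induction d with
    | zero =>
      intro m hm
      have : m = j := by omega
      rw [this, pow_zero, one_mul]
    | succ d ihd =>
      intro m hm
      have hmj : m < j := by omega
      have h1 : ρ⁻¹ * E m ≤ E (m+1) := (IH' m hmj).1
      have h2 : E m ≤ ρ * E (m+1) := by
        have h3 := mul_le_mul_of_nonneg_left h1 hρ0.le
        rwa [← mul_assoc, mul_inv_cancel₀ (ne_of_gt hρ0), one_mul] at h3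
      have h3 : E (m+1) ≤ ρ ^ d * E j := ihd (m+1) (by omega)
      calc E m ≤ ρ * E (m+1) := h2
        _ ≤ ρ * (ρ ^ d * E j) := mul_le_mul_of_nonneg_left h3 hρ0.le
        _ = ρ ^ (d+1) * E j := by rw [pow_succ]; ring
  have hEK : E (k j) ≤ ρ ^ τ * E j := by
    calc E (k j) ≤ ρ ^ (j - k j) * E j := chain (j - k j) (k j) (by have := (hk j).1; omega)
      _ ≤ ρ ^ τ * E j :=
        mul_le_mul_of_nonneg_right (pow_le_pow_right₀ hρ.le (by have := (hk j).2; omega)) (hE_nonneg j)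
  -- finite-sum machinery
  set Z : Ω → (Fin j → Fin n) := fun ω l => idx l ω with hZdef
  have hZmeas : Measurable Z := measurable_pi_lambda _ fun l => hidx_meas l
  set q : (Fin j → Fin n) → ℝ := fun b => (ℙ (Z ⁻¹' {b})).toReal with hqdef
  have hq : ∀ b, 0 ≤ q b := fun b => ENNReal.toReal_nonneg
  have hind : IndepFun Z (idx j) ℙ := by
    have h1 := hidx_indep.indepFun_finset (Finset.range j) {j}
      (by simp only [Finset.disjoint_left, Finset.mem_range, Finset.mem_singleton]; omega) hidx_meas
    have h2 := h1.comp
      (φ := fun (w : ↥(Finset.range j) → Fin n) =>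
        fun l : Fin j => w ⟨l.1, Finset.mem_range.mpr l.2⟩)
      (ψ := fun (w : ↥({j} : Finset ℕ) → Fin n) => w ⟨j, Finset.mem_singleton_self j⟩)
      (measurable_pi_lambda _ fun l => measurable_pi_apply _)
      (measurable_pi_apply _ : Measurable (fun (w : ↥({j} : Finset ℕ) → Fin n) => w ⟨j, Finset.mem_singleton_self j⟩))
    exact h2
  have hprod : ∀ b i, (ℙ ((fun ω => (Z ω, idx j ω)) ⁻¹' {(b, i)})).toReal = q b * (n:ℝ)⁻¹ := by
    intro b i
    have hset : (fun ω => (Z ω, idx j ω)) ⁻¹' {(b, i)} = Z ⁻¹' {b} ∩ (idx j) ⁻¹' {i} := by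
      ext ω; simp [Prod.ext_iff]
    have huni : ℙ ((idx j) ⁻¹' {i}) = (n : ℝ≥0∞)⁻¹ := hidx_unif j i
    rw [hset, hind.measure_inter_preimage_eq_mul _ _ (measurableSet_singleton b)
      (measurableSet_singleton i), huni, ENNReal.toReal_mul]
    congr 1
    simp
  have hrep : ∀ Φ : (Fin j → Fin n) → Fin n → ℝ,
      (∫ ω, Φ (Z ω) (idx j ω)) = (n:ℝ)⁻¹ * ∑ b, q b * ∑ i, Φ b i := by
    intro Φ
    have h0 := exp_comp_fintype (fun ω => (Z ω, idx j ω))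
      (hZmeas.prodMk (hidx_meas j)) (fun p => Φ p.1 p.2)
    rw [show (∫ ω, Φ (Z ω) (idx j ω))
        = ∫ ω, (fun p : (Fin j → Fin n) × Fin n => Φ p.1 p.2) (Z ω, idx j ω) from rfl,
      h0, Fintype.sum_prod_type, Finset.mul_sum]
    refine Finset.sum_congr rfl fun b _ => ?_
    rw [Finset.mul_sum, Finset.mul_sum]
    refine Finset.sum_congr rfl fun i _ => ?_
    rw [hprod b i]; ring
  -- deterministic per-history quantities
  set ext2 : (Fin j → Fin n) → Fin n → (ℕ → Fin n) :=
    fun b i l => if h : l < j then b ⟨l, h⟩ else i with hext2def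
  set i0 : Fin n := ⟨0, hn⟩ with hi0def
  set G : (Fin j → Fin n) → ℝ :=
    fun b => ‖gradient f (asyX f (γ / Lmax) k x0 j (ext2 b i0))‖ with hGdef
  set v : (Fin j → Fin n) → EuclideanSpace ℝ (Fin n) :=
    fun b => gradient f (asyX f (γ / Lmax) k x0 (k j) (ext2 b i0)) with hvdef
  set G' : (Fin j → Fin n) → Fin n → ℝ :=
    fun b i => ‖gradient f (asyX f (γ / Lmax) k x0 (j+1) (ext2 b i))‖ with hG'def
  have hGnn : ∀ b, 0 ≤ G b := fun b => norm_nonneg _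
  have hXr : ∀ r, r ≤ j → ∀ b i,
      asyX f (γ / Lmax) k x0 r (ext2 b i) = asyX f (γ / Lmax) k x0 r (ext2 b i0) := by
    intro r hr b i
    apply asyX_congr
    intro l hl
    have hlj : l < j := lt_of_lt_of_le hl hr
    show (if h : l < j then b ⟨l, h⟩ else i) = (if h : l < j then b ⟨l, h⟩ else i0)
    rw [dif_pos hlj, dif_pos hlj]
  have hXω : ∀ r, r ≤ j + 1 → ∀ ω,
      asyX f (γ / Lmax) k x0 r (ext2 (Z ω) (idx j ω)) = x r ω := by
    intro r hr ω
    rw [hxX r ω]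
    apply asyX_congr
    intro l hl
    by_cases hlj : l < j
    · show (if h : l < j then Z ω ⟨l, h⟩ else idx j ω) = idx l ω
      rw [dif_pos hlj]
    · have hl' : l = j := by omega
      subst hl'
      show (if h : l < l then Z ω ⟨l, h⟩ else idx l ω) = idx l ω
      rw [dif_neg hlj]
  have hkey : ∀ b i, |G' b i - G b| ≤ C * |v b i| := by
    intro b i
    have haj : ext2 b i j = i := by
      show (if h : j < j then b ⟨j, h⟩ else i) = i
      rw [dif_neg (lt_irrefl j)]
    have hsucc := asyX_succ f (γ / Lmax) k x0 (hk j).1 (ext2 b i)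
    rw [haj, hXr j le_rfl b i, hXr (k j) (hk j).1 b i] at hsucc
    have hL := hLres (asyX f (γ / Lmax) k x0 j (ext2 b i0)) i (-(γ / Lmax * v b i))
    rw [euclid_single_neg, ← sub_eq_add_neg] at hL
    rw [show asyX f (γ / Lmax) k x0 j (ext2 b i0) -
          EuclideanSpace.single i (γ / Lmax * v b i)
        = asyX f (γ / Lmax) k x0 (j+1) (ext2 b i) from by rw [hsucc]] at hL
    calc |G' b i - G b|
        ≤ ‖gradient f (asyX f (γ / Lmax) k x0 j (ext2 b i0))
            - gradient f (asyX f (γ / Lmax) k x0 (j+1) (ext2 b i))‖ := by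
          rw [abs_sub_comm]
          exact abs_norm_sub_norm_le _ _
      _ ≤ Lres * |(-(γ / Lmax * v b i))| := hL
      _ = C * |v b i| := by
          rw [abs_neg, abs_mul, abs_of_pos hcpos, hCdef]; ring
  set S1 : ℝ := ∑ b, q b * G b ^ 2 with hS1def
  set S2 : ℝ := ∑ b, q b * (G b * ‖v b‖) with hS2def
  set S3 : ℝ := ∑ b, q b * ‖v b‖ ^ 2 with hS3def
  have hEj' : E j = S1 := by
    have hpt : ∀ ω, ‖gradient f (x j ω)‖ ^ 2 = (fun b (_ : Fin n) => G b ^ 2) (Z ω) (idx j ω) := by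
      intro ω
      show _ = G (Z ω) ^ 2
      rw [hGdef, ← hXω j (Nat.le_succ j) ω, hXr j le_rfl (Z ω) (idx j ω)]
    calc E j = ∫ ω, (fun b (_ : Fin n) => G b ^ 2) (Z ω) (idx j ω) :=
          integral_congr_ae (Filter.Eventually.of_forall hpt)
      _ = (n:ℝ)⁻¹ * ∑ b, q b * ∑ _i : Fin n, G b ^ 2 := hrep (fun b _ => G b ^ 2)
      _ = S1 := by
          rw [hS1def, Finset.mul_sum]
          refine Finset.sum_congr rfl fun b _ => ?_
          rw [Finset.sum_const, Finset.card_univ, Fintype.card_fin, nsmul_eq_mul]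
          field_simp
  have hEK' : E (k j) = S3 := by
    have hpt : ∀ ω, ‖gradient f (x (k j) ω)‖ ^ 2
        = (fun b (_ : Fin n) => ‖v b‖ ^ 2) (Z ω) (idx j ω) := by
      intro ω
      show _ = ‖v (Z ω)‖ ^ 2
      rw [hvdef, ← hXω (k j) (le_trans (hk j).1 (Nat.le_succ j)) ω,
        hXr (k j) (hk j).1 (Z ω) (idx j ω)]
    calc E (k j) = ∫ ω, (fun b (_ : Fin n) => ‖v b‖ ^ 2) (Z ω) (idx j ω) :=
          integral_congr_ae (Filter.Eventually.of_forall hpt)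
      _ = (n:ℝ)⁻¹ * ∑ b, q b * ∑ _i : Fin n, ‖v b‖ ^ 2 := hrep (fun b _ => ‖v b‖ ^ 2)
      _ = S3 := by
          rw [hS3def, Finset.mul_sum]
          refine Finset.sum_congr rfl fun b _ => ?_
          rw [Finset.sum_const, Finset.card_univ, Fintype.card_fin, nsmul_eq_mul]
          field_simp
  have hEj1 : E (j+1) = (n:ℝ)⁻¹ * ∑ b, q b * ∑ i, G' b i ^ 2 := by
    have hpt : ∀ ω, ‖gradient f (x (j+1) ω)‖ ^ 2
        = (fun b i => G' b i ^ 2) (Z ω) (idx j ω) := by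
      intro ω
      show _ = G' (Z ω) (idx j ω) ^ 2
      rw [hG'def, ← hXω (j+1) le_rfl ω]
    calc E (j+1) = ∫ ω, (fun b i => G' b i ^ 2) (Z ω) (idx j ω) :=
          integral_congr_ae (Filter.Eventually.of_forall hpt)
      _ = (n:ℝ)⁻¹ * ∑ b, q b * ∑ i, G' b i ^ 2 := hrep (fun b i => G' b i ^ 2)
  have hvsum : ∀ b, ∑ i, |v b i| ≤ Real.sqrt n * ‖v b‖ := fun b => sum_abs_le_sqrt_norm (v b)
  have hbu : ∀ b, ∑ i, G' b i ^ 2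
      ≤ (n:ℝ) * G b ^ 2 + Real.sqrt n * (2 * C * (G b * ‖v b‖)) + C ^ 2 * ‖v b‖ ^ 2 := by
    intro b
    have h1 : ∑ i, G' b i ^ 2
        ≤ ∑ i, (G b ^ 2 + 2 * G b * (C * |v b i|) + (C * |v b i|) ^ 2) :=
      Finset.sum_le_sum fun i _ =>
        sq_bound_up (hGnn b) (by positivity) (norm_nonneg _) (hkey b i)
    have h2 : ∑ i, (G b ^ 2 + 2 * G b * (C * |v b i|) + (C * |v b i|) ^ 2)
        = (n:ℝ) * G b ^ 2 + 2 * G b * C * (∑ i, |v b i|) + C ^ 2 * (∑ i, (v b i) ^ 2) := by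
      rw [Finset.sum_add_distrib, Finset.sum_add_distrib]
      congr 1
      · congr 1
        · rw [Finset.sum_const, Finset.card_univ, Fintype.card_fin, nsmul_eq_mul]
        · rw [Finset.mul_sum]
          exact Finset.sum_congr rfl fun i _ => by ring
      · rw [Finset.mul_sum]
        exact Finset.sum_congr rfl fun i _ => by rw [mul_pow, sq_abs]
    have h3 : 2 * G b * C * (∑ i, |v b i|) ≤ 2 * G b * C * (Real.sqrt n * ‖v b‖) :=
      mul_le_mul_of_nonneg_left (hvsum b) (by positivity)
    have h4 : (∑ i, (v b i) ^ 2) = ‖v b‖ ^ 2 := sum_sq_eq_norm (v b)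
    calc ∑ i, G' b i ^ 2
        ≤ ∑ i, (G b ^ 2 + 2 * G b * (C * |v b i|) + (C * |v b i|) ^ 2) := h1
      _ = (n:ℝ) * G b ^ 2 + 2 * G b * C * (∑ i, |v b i|) + C ^ 2 * (∑ i, (v b i) ^ 2) := h2
      _ ≤ (n:ℝ) * G b ^ 2 + Real.sqrt n * (2 * C * (G b * ‖v b‖)) + C ^ 2 * ‖v b‖ ^ 2 := by
          rw [h4]
          linarith only [h3]
  have hbl : ∀ b, (n:ℝ) * G b ^ 2 - Real.sqrt n * (2 * C * (G b * ‖v b‖))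
      ≤ ∑ i, G' b i ^ 2 := by
    intro b
    have h1 : ∑ i, (G b ^ 2 - 2 * G b * (C * |v b i|)) ≤ ∑ i, G' b i ^ 2 :=
      Finset.sum_le_sum fun i _ => by
        have h0 := sq_bound_lo (hGnn b) (by positivity : (0:ℝ) ≤ C * |v b i|)
          (norm_nonneg _) (hkey b i)
        linarith only [h0]
    have h2 : ∑ i, (G b ^ 2 - 2 * G b * (C * |v b i|))
        = (n:ℝ) * G b ^ 2 - 2 * G b * C * (∑ i, |v b i|) := by
      rw [Finset.sum_sub_distrib, Finset.sum_const, Finset.card_univ, Fintype.card_fin,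
        nsmul_eq_mul, Finset.mul_sum]
      congr 1
      exact Finset.sum_congr rfl fun i _ => by ring
    have h3 : 2 * G b * C * (∑ i, |v b i|) ≤ 2 * G b * C * (Real.sqrt n * ‖v b‖) :=
      mul_le_mul_of_nonneg_left (hvsum b) (by positivity)
    calc (n:ℝ) * G b ^ 2 - Real.sqrt n * (2 * C * (G b * ‖v b‖))
        = (n:ℝ) * G b ^ 2 - 2 * G b * C * (Real.sqrt n * ‖v b‖) := by ring
      _ ≤ (n:ℝ) * G b ^ 2 - 2 * G b * C * (∑ i, |v b i|) := by linarith only [h3]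
      _ = ∑ i, (G b ^ 2 - 2 * G b * (C * |v b i|)) := h2.symm
      _ ≤ ∑ i, G' b i ^ 2 := h1
  have hup1 : E (j+1) ≤ (n:ℝ)⁻¹ * ((n:ℝ) * S1 + Real.sqrt n * (2 * C) * S2 + C ^ 2 * S3) := by
    rw [hEj1]
    apply mul_le_mul_of_nonneg_left ?_ (by positivity : (0:ℝ) ≤ (n:ℝ)⁻¹)
    calc ∑ b, q b * ∑ i, G' b i ^ 2
        ≤ ∑ b, q b * ((n:ℝ) * G b ^ 2 + Real.sqrt n * (2 * C * (G b * ‖v b‖)) + C ^ 2 * ‖v b‖ ^ 2) :=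
          Finset.sum_le_sum fun b _ => mul_le_mul_of_nonneg_left (hbu b) (hq b)
      _ = (n:ℝ) * S1 + Real.sqrt n * (2 * C) * S2 + C ^ 2 * S3 := by
          rw [hS1def, hS2def, hS3def, Finset.mul_sum, Finset.mul_sum, Finset.mul_sum,
            ← Finset.sum_add_distrib, ← Finset.sum_add_distrib]
          exact Finset.sum_congr rfl fun b _ => by ring
  have hlo1 : (n:ℝ)⁻¹ * ((n:ℝ) * S1 - Real.sqrt n * (2 * C) * S2) ≤ E (j+1) := by
    rw [hEj1]
    apply mul_le_mul_of_nonneg_left ?_ (by positivity : (0:ℝ) ≤ (n:ℝ)⁻¹)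
    calc (n:ℝ) * S1 - Real.sqrt n * (2 * C) * S2
        = ∑ b, q b * ((n:ℝ) * G b ^ 2 - Real.sqrt n * (2 * C * (G b * ‖v b‖))) := by
          rw [hS1def, hS2def, Finset.mul_sum, Finset.mul_sum, ← Finset.sum_sub_distrib]
          exact Finset.sum_congr rfl fun b _ => by ring
      _ ≤ ∑ b, q b * ∑ i, G' b i ^ 2 :=
          Finset.sum_le_sum fun b _ => mul_le_mul_of_nonneg_left (hbl b) (hq b)
  have hS1nn : 0 ≤ S1 := by rw [← hEj']; exact hE_nonneg j
  have hS3le : S3 ≤ ρ ^ τ * S1 := by rw [← hEK', ← hEj']; exact hEK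
  have hS2le : S2 ≤ ρ ^ τ * S1 := by
    have h1 : S2 ≤ ∑ b, q b * ((G b ^ 2 + ‖v b‖ ^ 2) / 2) := by
      rw [hS2def]
      exact Finset.sum_le_sum fun b _ => mul_le_mul_of_nonneg_left
        (by linarith only [sq_nonneg (G b - ‖v b‖)]) (hq b)
    have h2 : ∑ b, q b * ((G b ^ 2 + ‖v b‖ ^ 2) / 2) = (S1 + S3) / 2 := by
      rw [hS1def, hS3def, ← Finset.sum_add_distrib, Finset.sum_div]
      exact Finset.sum_congr rfl fun b _ => by ring
    have h3 : S1 ≤ ρ ^ τ * S1 := le_mul_of_one_le_left hS1nn hρτ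
    linarith only [h1, h2, h3, hS3le]
  have h2A : 2 * A ≤ (ρ - 1) / ρ := by
    rw [le_div_iff₀ hρ0]
    linarith only [hA]
  constructor
  · -- lower bound
    have h4 : Real.sqrt n * (2 * C) * S2 ≤ Real.sqrt n * (2 * C) * (ρ ^ τ * S1) :=
      mul_le_mul_of_nonneg_left hS2le (by positivity)
    have h5 : (n:ℝ)⁻¹ * ((n:ℝ) * S1 - Real.sqrt n * (2 * C) * (ρ ^ τ * S1))
        ≤ (n:ℝ)⁻¹ * ((n:ℝ) * S1 - Real.sqrt n * (2 * C) * S2) :=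
      mul_le_mul_of_nonneg_left (by linarith only [h4]) (by positivity)
    have e : (n:ℝ)⁻¹ * ((n:ℝ) * S1 - Real.sqrt n * (2 * C) * (ρ ^ τ * S1))
        = S1 * (1 - 2 * A) := by
      have e0 := scalar_e1 (Real.sqrt n) S1 C (ρ ^ τ) (ne_of_gt hs)
      rw [hss, ← hAdef] at e0
      exact e0
    have h7 : ρ⁻¹ ≤ 1 - 2 * A := by
      have e2 : 1 - (ρ - 1) / ρ = ρ⁻¹ := by field_simp; ring
      linarith only [h2A, e2]
    calc ρ⁻¹ * E j = ρ⁻¹ * S1 := by rw [hEj']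
      _ ≤ (1 - 2 * A) * S1 := mul_le_mul_of_nonneg_right h7 hS1nn
      _ = S1 * (1 - 2 * A) := by ring
      _ = (n:ℝ)⁻¹ * ((n:ℝ) * S1 - Real.sqrt n * (2 * C) * (ρ ^ τ * S1)) := e.symm
      _ ≤ (n:ℝ)⁻¹ * ((n:ℝ) * S1 - Real.sqrt n * (2 * C) * S2) := h5
      _ ≤ E (j+1) := hlo1
  · -- upper bound
    have h4 : Real.sqrt n * (2 * C) * S2 ≤ Real.sqrt n * (2 * C) * (ρ ^ τ * S1) :=
      mul_le_mul_of_nonneg_left hS2le (by positivity)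
    have h4' : C ^ 2 * S3 ≤ C ^ 2 * (ρ ^ τ * S1) :=
      mul_le_mul_of_nonneg_left hS3le (by positivity)
    have h5 : E (j+1) ≤ (n:ℝ)⁻¹ * ((n:ℝ) * S1 + Real.sqrt n * (2 * C) * (ρ ^ τ * S1)
        + C ^ 2 * (ρ ^ τ * S1)) :=
      le_trans hup1 (mul_le_mul_of_nonneg_left (by linarith only [h4, h4']) (by positivity))
    have e : (n:ℝ)⁻¹ * ((n:ℝ) * S1 + Real.sqrt n * (2 * C) * (ρ ^ τ * S1)
        + C ^ 2 * (ρ ^ τ * S1))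
        = S1 * (1 + 2 * A + (C / Real.sqrt n) ^ 2 * ρ ^ τ) := by
      have e0 := scalar_e2 (Real.sqrt n) S1 C (ρ ^ τ) (ne_of_gt hs)
      rw [hss, ← hAdef] at e0
      exact e0
    have h8 : (C / Real.sqrt n) ^ 2 * ρ ^ τ ≤ A ^ 2 := by
      have e2 : A ^ 2 = (C / Real.sqrt n) ^ 2 * ρ ^ τ * ρ ^ τ := by rw [hAdef]; ring
      have e3 : (C / Real.sqrt n) ^ 2 * ρ ^ τ * 1 ≤ (C / Real.sqrt n) ^ 2 * ρ ^ τ * ρ ^ τ :=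
        mul_le_mul_of_nonneg_left hρτ (by positivity)
      linarith only [e2, e3]
    have h9 : 2 * A + A ^ 2 ≤ ρ - 1 := by
      have hu : (0:ℝ) ≤ ρ - 1 := by linarith only [hρ]
      have p1 : A * (2 * ρ) * A ≤ (ρ - 1) * A := mul_le_mul_of_nonneg_right hA hA0
      have p2 : (ρ - 1) * (A * (2 * ρ)) ≤ (ρ - 1) * (ρ - 1) :=
        mul_le_mul_of_nonneg_left hA hu
      have p3 : (2 * ρ) * (A * (2 * ρ) * A) ≤ (2 * ρ) * ((ρ - 1) * A) :=
        mul_le_mul_of_nonneg_left p1 (by positivity)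
      have p4 : (2 * ρ) * ((ρ - 1) * (A * (2 * ρ))) ≤ (2 * ρ) * ((ρ - 1) * (ρ - 1)) :=
        mul_le_mul_of_nonneg_left p2 (by positivity)
      have p5 : (ρ - 1) * (A * (2 * ρ)) ≥ 0 := mul_nonneg hu (by positivity)
      nlinarith only [hA, p3, p4, hρ, hA0, hρ0]
    have h10 : S1 * (1 + 2 * A + (C / Real.sqrt n) ^ 2 * ρ ^ τ) ≤ S1 * ρ :=
      mul_le_mul_of_nonneg_left (by linarith only [h8, h9]) hS1nn
    calc E (j+1) ≤ _ := h5
      _ = S1 * (1 + 2 * A + (C / Real.sqrt n) ^ 2 * ρ ^ τ) := e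
      _ ≤ S1 * ρ := h10
      _ = ρ * E j := by rw [hEj']; ring
end

section
/- Under the constrained AsySCD iteration, suppose n ≥ 5, let ρ > (1 − 2/√n)^{-1}, and define ψ = 1 + (L_res·τ·ρ^τ/(√n·L_max))·(2 + L_max/(√n·L_res) + 2τ/n). If γ > 0 satisfies γ ≤ 1/ψ and γ ≤ (1 − 1/ρ − 2/√n)·√n·L_max/(4L_res·τ·ρ^τ), then for every j ≥ 1, E‖x_{j−1} − x̄_j‖² ≤ ρ·E‖x_j − x̄_{j+1}‖². -/
open MeasureTheory ProbabilityTheory Real ENNReal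
section auxlemmas

variable {E : Type*} [NormedAddCommGroup E] [InnerProductSpace ℝ E]

private lemma sq_le_sq'' {a b : ℝ} (ha : 0 ≤ a) (hb : 0 ≤ b) (h : a^2 ≤ b^2) : a ≤ b := by
  nlinarith

private lemma aux_varIneq {C : Set E} (hC : Convex ℝ C) {y p : E} (hp : p ∈ C)
    (hmin : ∀ z ∈ C, ‖y - p‖ ≤ ‖y - z‖) :
    ∀ z ∈ C, (inner ℝ (y - p) (z - p) : ℝ) ≤ 0 := by
  intro z hz
  by_contra hcon
  push_neg at hcon
  set I : ℝ := (inner ℝ (y - p) (z - p) : ℝ) with hI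
  set c : ℝ := ‖z - p‖^2 with hc
  have hc0 : 0 ≤ c := sq_nonneg _
  set t : ℝ := min 1 (I / (c + 1)) with ht
  have ht0 : 0 < t := lt_min one_pos (div_pos hcon (by linarith))
  have ht1 : t ≤ 1 := min_le_left _ _
  have htI : t * (c + 1) ≤ I := by
    have : t ≤ I / (c + 1) := min_le_right _ _
    rw [le_div_iff₀ (by linarith)] at this
    linarith
  have hw : p + t • (z - p) ∈ C := by
    have h2 := hC hp hz (by linarith : (0:ℝ) ≤ 1 - t) (le_of_lt ht0) (by ring)
    convert h2 using 1
    rw [smul_sub]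
    module
  have hle : ‖y - p‖ ≤ ‖y - (p + t • (z - p))‖ := hmin _ hw
  have hre : y - (p + t • (z - p)) = (y - p) - t • (z - p) := by abel
  have hsq : ‖y - p‖^2 ≤ ‖(y - p) - t • (z - p)‖^2 := by
    rw [← hre]
    have := norm_nonneg (y - p)
    nlinarith [norm_nonneg (y - (p + t • (z - p)))]
  have hexp : ‖(y - p) - t • (z - p)‖^2 = ‖y - p‖^2 - 2 * (t * I) + t^2 * c := by
    rw [norm_sub_sq_real, real_inner_smul_right, norm_smul]
    simp only [Real.norm_eq_abs, mul_pow, sq_abs, hc]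
    rw [← hI]
  rw [hexp] at hsq
  nlinarith [mul_pos ht0 hcon]

private lemma aux_uniq {C : Set E} {y p q : E} (hp : p ∈ C) (hq : q ∈ C)
    (h1 : ∀ z ∈ C, (inner ℝ (y - p) (z - p) : ℝ) ≤ 0)
    (h2 : ∀ z ∈ C, (inner ℝ (y - q) (z - q) : ℝ) ≤ 0) : p = q := by
  have k1 := h1 q hq
  have k2 := h2 p hp
  have key : (inner ℝ (q - p) (q - p) : ℝ) = inner ℝ (y - p) (q - p) + inner ℝ (y - q) (p - q) := by
    have hpq : p - q = -(q - p) := by abel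
    rw [hpq, inner_neg_right, ← sub_eq_add_neg, ← inner_sub_left]
    congr 1
    abel
  have : (inner ℝ (q - p) (q - p) : ℝ) ≤ 0 := by rw [key]; linarith
  have h0 : q - p = 0 := by
    have := real_inner_self_nonneg (x := q - p)
    have : (inner ℝ (q - p) (q - p) : ℝ) = 0 := le_antisymm ‹_› ‹_›
    exact inner_self_eq_zero.mp this
  have : q = p := by rwa [sub_eq_zero] at h0
  exact this.symm

private lemma aux_nonexp {A B p q : E}
    (h1 : (inner ℝ (A - p) (q - p) : ℝ) ≤ 0) (h2 : (inner ℝ (B - q) (p - q) : ℝ) ≤ 0) :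
    ‖p - q‖ ≤ ‖A - B‖ ∧ ‖(A - p) - (B - q)‖ ≤ ‖A - B‖ := by
  set u := A - B with hu
  set v := p - q with hv
  have huv : (A - p) - (B - q) = u - v := by rw [hu, hv]; abel
  have hinner : ‖v‖^2 ≤ (inner ℝ u v : ℝ) := by
    have e1 : (inner ℝ (A - p) v : ℝ) = - inner ℝ (A - p) (q - p) := by
      rw [← inner_neg_right]; congr 1; rw [hv]; abel
    have e2 : (inner ℝ (B - q) v : ℝ) = inner ℝ (B - q) (p - q) := by rw [hv]
    have e3 : (inner ℝ (u - v) v : ℝ) = inner ℝ (A - p) v - inner ℝ (B - q) v := by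
      rw [← inner_sub_left, huv.symm]
    have e4 : (inner ℝ (u - v) v : ℝ) = inner ℝ u v - inner ℝ v v := by
      rw [inner_sub_left]
    have e5 : (0:ℝ) ≤ inner ℝ (u - v) v := by rw [e3, e1, e2]; linarith
    rw [e4] at e5
    rw [real_inner_self_eq_norm_sq] at e5
    linarith
  constructor
  · have hcs : (inner ℝ u v : ℝ) ≤ ‖u‖ * ‖v‖ := real_inner_le_norm u v
    have hv0 := norm_nonneg v
    have hu0 := norm_nonneg u
    rcases eq_or_lt_of_le hv0 with h | h
    · rw [← h]; exact hu0
    · nlinarith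
  · have hexp : ‖u - v‖^2 = ‖u‖^2 - 2 * (inner ℝ u v : ℝ) + ‖v‖^2 := norm_sub_sq_real u v
    have : ‖u - v‖^2 ≤ ‖u‖^2 := by nlinarith
    rw [huv]
    exact sq_le_sq'' (norm_nonneg _) (norm_nonneg _) this

private lemma aux_num {b u B : ℝ} (hb0 : 0 < b) (hb1 : b < 1) (hu : 0 < u) (hu1 : u < 1)
    (hus : u^2 < 1 - b) (hB : B ≤ u*(1 - u^2 - b)/2) : u ≤ 1 - b/2 - B := by
  have h1 : 0 ≤ 1 - u := by linarith
  have h2 : 0 ≤ 2 - b - u - u^2 := by nlinarith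
  nlinarith [mul_nonneg h1 h2]

private lemma euc_norm_sq {ι : Type*} [Fintype ι] (v : EuclideanSpace ℝ ι) :
    ‖v‖^2 = ∑ i, (v i)^2 := by
  rw [EuclideanSpace.norm_eq, Real.sq_sqrt (by positivity)]
  simp [Real.norm_eq_abs, sq_abs]

private lemma euc_norm_mono {ι : Type*} [Fintype ι] (u v : EuclideanSpace ℝ ι)
    (h : ∀ i, |u i| ≤ v i) : ‖u‖ ≤ ‖v‖ := by
  have h2 : ‖u‖^2 ≤ ‖v‖^2 := by
    rw [euc_norm_sq, euc_norm_sq]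
    apply Finset.sum_le_sum
    intro i _
    have h3 := h i
    have := abs_nonneg (u i)
    nlinarith [le_abs_self (v i), sq_abs (u i)]
  exact sq_le_sq'' (norm_nonneg _) (norm_nonneg _) h2

end auxlemmas
private lemma pilp_sum_apply {ι κ : Type*} [Fintype κ] (s : Finset ι)
    (u : ι → EuclideanSpace ℝ κ) (i : κ) : (∑ l ∈ s, u l) i = ∑ l ∈ s, u l i := by
  classical
  induction s using Finset.induction with
  | empty => simp
  | @insert a s h ih => rw [Finset.sum_insert h, Finset.sum_insert h, PiLp.add_apply, ih]
private lemma aux_regroup {J n : ℕ} (hn : 0 < n) (i0 : Fin J)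
    (D : (Fin J → Fin n) → Fin n → ℝ)
    (hD : ∀ a a' : Fin J → Fin n, (∀ m, m ≠ i0 → a m = a' m) → D a = D a') :
    ∑ a : Fin J → Fin n, (D a (a i0))^2
      = (1/(n:ℝ)) * ∑ a : Fin J → Fin n, ∑ i, (D a i)^2 := by
  classical
  set e := Equiv.piSplitAt i0 (fun _ : Fin J => Fin n) with he
  have hsva : ∀ (v : Fin n) (r : ∀ _ : {m : Fin J // m ≠ i0}, Fin n) (m : Fin J) (h : m ≠ i0),
      e.symm (v, r) m = r ⟨m, h⟩ := by
    intro v r m h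
    simp [he, Equiv.piSplitAt, h]
  have hsv0 : ∀ (v : Fin n) (r : ∀ _ : {m : Fin J // m ≠ i0}, Fin n), e.symm (v, r) i0 = v := by
    intro v r
    simp [he, Equiv.piSplitAt]
  have hDconst : ∀ (v v' : Fin n) r, D (e.symm (v, r)) = D (e.symm (v', r)) := by
    intro v v' r
    apply hD
    intro m hm
    rw [hsva v r m hm, hsva v' r m hm]
  set v0 : Fin n := ⟨0, hn⟩ with hv0
  have hL : ∑ a : Fin J → Fin n, (D a (a i0))^2
      = ∑ r, ∑ v, (D (e.symm (v0, r)) v)^2 := by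
    rw [← Equiv.sum_comp e.symm (fun a => (D a (a i0))^2)]
    rw [Fintype.sum_prod_type, Finset.sum_comm]
    apply Finset.sum_congr rfl
    intro r _
    apply Finset.sum_congr rfl
    intro v _
    rw [hsv0 v r, hDconst v v0 r]
  have hR : ∑ a : Fin J → Fin n, ∑ i, (D a i)^2
      = (n:ℝ) * ∑ r, ∑ i, (D (e.symm (v0, r)) i)^2 := by
    rw [← Equiv.sum_comp e.symm (fun a => ∑ i, (D a i)^2)]
    rw [Fintype.sum_prod_type, Finset.sum_comm]
    have hinner : ∀ r, ∑ v : Fin n, ∑ i, (D (e.symm (v, r)) i)^2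
        = (n:ℝ) * ∑ i, (D (e.symm (v0, r)) i)^2 := by
      intro r
      have : ∀ v : Fin n, ∑ i, (D (e.symm (v, r)) i)^2 = ∑ i, (D (e.symm (v0, r)) i)^2 := by
        intro v
        rw [hDconst v v0 r]
      rw [Finset.sum_congr rfl (fun v _ => this v), Finset.sum_const, Finset.card_univ,
        Fintype.card_fin, nsmul_eq_mul]
    rw [Finset.sum_congr rfl (fun r _ => hinner r), ← Finset.mul_sum]
  rw [hL, hR]
  have hn' : (n:ℝ) ≠ 0 := by positivity
  field_simp
set_option maxHeartbeats 1000000 in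
theorem asyscd_constrained_ratio_bound
    {n : ℕ} (hn : 5 ≤ n)
    (f : EuclideanSpace ℝ (Fin n) → ℝ)
    (hf_smooth : ContDiff ℝ 1 f)
    (C : Set (EuclideanSpace ℝ (Fin n)))
    (Ci : Fin n → Set ℝ)
    (hCi : ∀ i, (Ci i).Nonempty ∧ IsClosed (Ci i) ∧ (Ci i).OrdConnected)
    (hC : C = {z | ∀ i, z i ∈ Ci i})
    (hf_conv : ConvexOn ℝ C f)
    (S : Set (EuclideanSpace ℝ (Fin n)))
    (hS : S = {z | z ∈ C ∧ ∀ y ∈ C, f z ≤ f y}) (hS_ne : S.Nonempty)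
    (fstar : ℝ) (hfstar : ∀ z ∈ S, f z = fstar)
    (PS : EuclideanSpace ℝ (Fin n) → EuclideanSpace ℝ (Fin n))
    (hPS : ∀ z, PS z ∈ S ∧ ∀ y ∈ S, ‖z - PS z‖ ≤ ‖z - y‖)
    (PC : EuclideanSpace ℝ (Fin n) → EuclideanSpace ℝ (Fin n))
    (hPC : ∀ z, PC z ∈ C ∧ ∀ y ∈ C, ‖z - PC z‖ ≤ ‖z - y‖)
    (Lres Lmax : ℝ) (hLres_pos : 0 < Lres) (hLmax_pos : 0 < Lmax)
    (hLres : ∀ (z : EuclideanSpace ℝ (Fin n)) (i : Fin n) (t : ℝ),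
      z ∈ C → z + EuclideanSpace.single i t ∈ C →
      ‖gradient f z - gradient f (z + EuclideanSpace.single i t)‖ ≤ Lres * |t|)
    (Li : Fin n → ℝ)
    (hLi : ∀ (z : EuclideanSpace ℝ (Fin n)) (i : Fin n) (t : ℝ),
      z ∈ C → z + EuclideanSpace.single i t ∈ C →
      |gradient f z i - gradient f (z + EuclideanSpace.single i t) i| ≤ Li i * |t|)
    (hLmax : IsGreatest (Set.range Li) Lmax)
    {Ω : Type} [MeasureSpace Ω] [IsProbabilityMeasure (ℙ : Measure Ω)]
    (idx : ℕ → Ω → Fin n) (hidx_meas : ∀ j, Measurable (idx j))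
    (hidx_unif : ∀ j i, ℙ {ω | idx j ω = i} = (n : ℝ≥0∞)⁻¹)
    (hidx_indep : iIndepFun idx ℙ)
    (τ : ℕ) (k : ℕ → ℕ) (hk : ∀ j, k j ≤ j ∧ j ≤ k j + τ)
    (γ : ℝ)
    (x0 : EuclideanSpace ℝ (Fin n)) (hx0C : x0 ∈ C)
    (x : ℕ → Ω → EuclideanSpace ℝ (Fin n))
    (hx0 : ∀ ω, x 0 ω = x0)
    (hxiter : ∀ j ω, x (j+1) ω =
      PC (x j ω - EuclideanSpace.single (idx j ω) (γ / Lmax * gradient f (x (k j) ω) (idx j ω))))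
    (R0 : ℝ) (hR0 : R0 = ‖x0 - PS x0‖)
    (ρ : ℝ) (hρ : (1 - 2 / Real.sqrt n)⁻¹ < ρ)
    (ψ : ℝ) (hψ : ψ = 1 + Lres * τ * ρ ^ τ / (Real.sqrt n * Lmax) *
      (2 + Lmax / (Real.sqrt n * Lres) + 2 * τ / n))
    (hγ_pos : 0 < γ)
    (hγ1 : γ ≤ 1 / ψ)
    (hγ2 : γ ≤ (1 - 1 / ρ - 2 / Real.sqrt n) * Real.sqrt n * Lmax / (4 * Lres * τ * ρ ^ τ))
    (xbar : ℕ → Ω → EuclideanSpace ℝ (Fin n))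
    (hxbar : ∀ j ω, xbar (j+1) ω ∈ C ∧
      IsMinOn (fun z => (inner ℝ (gradient f (x (k j) ω)) (z - x j ω) : ℝ) +
        Lmax / (2 * γ) * ‖z - x j ω‖ ^ 2) C (xbar (j+1) ω)) :
    ∀ j : ℕ, 1 ≤ j →
      (∫ ω, ‖x (j-1) ω - xbar j ω‖ ^ 2) ≤ ρ * ∫ ω, ‖x j ω - xbar (j+1) ω‖ ^ 2 := by
  classical
  -- τ ≥ 1
  have hτ1 : 1 ≤ τ := by
    rcases Nat.eq_zero_or_pos τ with h | h
    · exfalso; subst h; rw [Nat.cast_zero] at hγ2; simp at hγ2; linarith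
    · exact h
  -- basic real facts
  have hn0 : (0:ℝ) < n := by
    have h5 : (5:ℝ) ≤ (n:ℝ) := by exact_mod_cast hn
    linarith
  have hsn0 : 0 < Real.sqrt n := Real.sqrt_pos.mpr hn0
  have hsn2 : 2 < Real.sqrt n := by
    rw [show (2:ℝ) = Real.sqrt 4 by
      rw [show (4:ℝ) = 2^2 by norm_num, Real.sqrt_sq (by norm_num)]]
    apply Real.sqrt_lt_sqrt (by norm_num)
    have : (5:ℝ) ≤ (n:ℝ) := by exact_mod_cast hn
    linarith
  set b : ℝ := 2 / Real.sqrt n with hbdef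
  have hb0 : 0 < b := by positivity
  have hb1 : b < 1 := by
    rw [hbdef, div_lt_one hsn0]; linarith
  have h1b : 0 < 1 - b := by linarith
  have hρ1 : 1 < ρ := by
    have : 1 < (1-b)⁻¹ := by
      rw [lt_inv_comm₀ (by norm_num) h1b]; linarith
    linarith [hρ]
  have hρ0 : 0 < ρ := by linarith
  have hsρ : 0 < Real.sqrt ρ := Real.sqrt_pos.mpr hρ0
  set u : ℝ := (Real.sqrt ρ)⁻¹ with hudef
  have hu0 : 0 < u := by positivity
  have hu2 : u^2 = ρ⁻¹ := by
    rw [hudef, ← Real.sqrt_inv]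
    exact Real.sq_sqrt (by positivity)
  have hus : u^2 < 1 - b := by
    rw [hu2]
    rw [inv_lt_comm₀ h1b hρ0] at hρ
    · exact hρ
  have hu1 : u < 1 := by nlinarith
  -- convexity of C
  have hCconv : Convex ℝ C := by
    rw [hC]
    rintro z hz z' hz' a b' ha hb' hab
    simp only [Set.mem_setOf_eq] at *
    intro i
    have h2 := ((hCi i).2.2.convex) (hz i) (hz' i) ha hb' hab
    simpa [PiLp.add_apply, PiLp.smul_apply, smul_eq_mul] using h2
  -- projection facts
  have hPCmem : ∀ y, PC y ∈ C := fun y => (hPC y).1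
  have hPCvar : ∀ y, ∀ z ∈ C, (inner ℝ (y - PC y) (z - PC y) : ℝ) ≤ 0 :=
    fun y => aux_varIneq hCconv (hPC y).1 (hPC y).2
  -- identification of xbar
  have hxbarEq : ∀ l ω, xbar (l+1) ω = PC (x l ω - (γ / Lmax) • gradient f (x (k l) ω)) := by
    intro l ω
    obtain ⟨hmem, hminon⟩ := hxbar l ω
    set g := gradient f (x (k l) ω) with hg
    set xx := x l ω with hxx
    set y := xx - (γ / Lmax) • g with hy
    set p := xbar (l+1) ω with hp
    have hβ : (0:ℝ) < Lmax / (2*γ) := by positivity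
    have hφ : ∀ z : EuclideanSpace ℝ (Fin n), (inner ℝ g (z - xx) : ℝ) + Lmax/(2*γ) * ‖z - xx‖^2
        = Lmax/(2*γ) * ‖z - y‖^2 - Lmax/(2*γ) * (γ/Lmax)^2 * ‖g‖^2 := by
      intro z
      have hzid : z - y = (z - xx) + (γ/Lmax) • g := by rw [hy]; abel
      rw [hzid, norm_add_sq_real, real_inner_smul_right, norm_smul]
      have hLne : Lmax ≠ 0 := ne_of_gt hLmax_pos
      have hγne : γ ≠ 0 := ne_of_gt hγ_pos
      rw [real_inner_comm]
      simp only [Real.norm_eq_abs, mul_pow, sq_abs]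
      field_simp
      ring
    have hmin : ∀ z ∈ C, ‖y - p‖ ≤ ‖y - z‖ := by
      intro z hz
      have h2 := isMinOn_iff.mp hminon z hz
      rw [hφ p, hφ z] at h2
      have h3 : ‖p - y‖^2 ≤ ‖z - y‖^2 := by nlinarith
      have h4 : ‖p - y‖ ≤ ‖z - y‖ := sq_le_sq'' (norm_nonneg _) (norm_nonneg _) h3
      rw [norm_sub_rev y p, norm_sub_rev y z]
      exact h4
    have hv1 := aux_varIneq hCconv hmem hmin
    exact aux_uniq hmem (hPCmem y) hv1 (hPCvar y)
  -- membership of iterates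
  have hxC : ∀ l ω, x l ω ∈ C := by
    intro l
    induction l with
    | zero => intro ω; rw [hx0]; exact hx0C
    | succ l ih => intro ω; rw [hxiter]; exact hPCmem _
  have hxbarC : ∀ l ω, xbar (l+1) ω ∈ C := fun l ω => (hxbar l ω).1
  -- single-coordinate update structure
  have hupd : ∀ l ω, x (l+1) ω = x l ω +
      EuclideanSpace.single (idx l ω) ((xbar (l+1) ω - x l ω) (idx l ω)) := by
    intro l ω
    set i := idx l ω with hi
    set g := gradient f (x (k l) ω) with hg
    set xx := x l ω with hxx
    set q := xbar (l+1) ω with hq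
    have hqPC : q = PC (xx - (γ/Lmax) • g) := hxbarEq l ω
    set y2 := xx - (γ/Lmax) • g with hy2
    set t : ℝ := γ / Lmax * g i with ht
    set y1 := xx - EuclideanSpace.single i t with hy1
    set wv := xx + EuclideanSpace.single i ((q - xx) i) with hwv
    have hwvco : ∀ m, wv m = if m = i then q i else xx m := by
      intro m
      rw [hwv, PiLp.add_apply, EuclideanSpace.single_apply]
      by_cases hmi : m = i
      · rw [if_pos hmi, if_pos hmi, PiLp.sub_apply, hmi]; ring
      · rw [if_neg hmi, if_neg hmi, add_zero]
    have hxxC : xx ∈ C := hxC l ω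
    have hqC : q ∈ C := hxbarC l ω
    rw [hC] at hxxC hqC
    simp only [Set.mem_setOf_eq] at hxxC hqC
    have hwvC : wv ∈ C := by
      rw [hC]
      simp only [Set.mem_setOf_eq]
      intro m
      rw [hwvco m]
      by_cases hmi : m = i
      · rw [if_pos hmi, hmi]; exact hqC i
      · rw [if_neg hmi]; exact hxxC m
    have hy1co : ∀ m, y1 m = if m = i then xx i - t else xx m := by
      intro m
      rw [hy1, PiLp.sub_apply, EuclideanSpace.single_apply]
      by_cases hmi : m = i
      · rw [if_pos hmi, if_pos hmi, hmi]
      · rw [if_neg hmi, if_neg hmi, sub_zero]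
    have hy2i : y2 i = xx i - t := by
      rw [hy2, PiLp.sub_apply, PiLp.smul_apply, smul_eq_mul, ht]
    have hvar_w : ∀ z ∈ C, (inner ℝ (y1 - wv) (z - wv) : ℝ) ≤ 0 := by
      intro z hz
      have hsum : (inner ℝ (y1 - wv) (z - wv) : ℝ) = ∑ m, (y1 - wv) m * (z - wv) m := by
        simp [PiLp.inner_apply, RCLike.inner_apply, conj_trivial]
        exact Finset.sum_congr rfl (fun _ _ => mul_comm _ _)
      rw [hsum]
      have hzero : ∀ m, m ≠ i → (y1 - wv) m * (z - wv) m = 0 := by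
        intro m hmi
        rw [PiLp.sub_apply, hy1co m, hwvco m, if_neg hmi, if_neg hmi, sub_self, zero_mul]
      rw [Finset.sum_eq_single i (fun m _ hmi => hzero m hmi) (by simp)]
      -- now the i-th term
      show (y1.ofLp i - wv.ofLp i) * (z.ofLp i - wv.ofLp i) ≤ 0
      rw [hy1co i, hwvco i, if_pos rfl, if_pos rfl]
      -- goal: (xx i - t - q i) * (z i - q i) ≤ 0
      set z2 := q + EuclideanSpace.single i (z i - q i) with hz2
      have hz2co : ∀ m, z2 m = if m = i then z i else q m := by
        intro m
        rw [hz2, PiLp.add_apply, EuclideanSpace.single_apply]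
        by_cases hmi : m = i
        · rw [if_pos hmi, if_pos hmi, hmi]; ring
        · rw [if_neg hmi, if_neg hmi, add_zero]
      rw [hC] at hz
      simp only [Set.mem_setOf_eq] at hz
      have hz2C : z2 ∈ C := by
        rw [hC]
        simp only [Set.mem_setOf_eq]
        intro m
        rw [hz2co m]
        by_cases hmi : m = i
        · rw [if_pos hmi, hmi]; exact hz i
        · rw [if_neg hmi]; exact hqC m
      have h3 := hPCvar y2 z2 hz2C
      rw [← hqPC] at h3
      have hsum2 : (inner ℝ (y2 - q) (z2 - q) : ℝ) = ∑ m, (y2 - q) m * (z2 - q) m := by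
        simp [PiLp.inner_apply, RCLike.inner_apply, conj_trivial]
        exact Finset.sum_congr rfl (fun _ _ => mul_comm _ _)
      rw [hsum2] at h3
      have hz2zero : ∀ m, m ≠ i → (y2 - q) m * (z2 - q) m = 0 := by
        intro m hmi
        have hz0 : (z2 - q) m = 0 := by
          rw [PiLp.sub_apply, hz2co m, if_neg hmi, sub_self]
        rw [hz0, mul_zero]
      rw [Finset.sum_eq_single i (fun m _ hmi => hz2zero m hmi) (by simp)] at h3
      change (y2.ofLp i - q.ofLp i) * (z2.ofLp i - q.ofLp i) ≤ 0 at h3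
      rw [hy2i, hz2co i, if_pos rfl] at h3
      exact h3
    have hPCy1 : PC y1 = wv := aux_uniq (hPCmem y1) hwvC (hPCvar y1) hvar_w
    rw [hxiter l ω, ← hi, ← hg, ← hxx, ← ht, ← hy1, hPCy1, hwv]
  have hstep : ∀ l ω, ‖x (l+1) ω - x l ω‖ = |(xbar (l+1) ω - x l ω) (idx l ω)| := by
    intro l ω
    rw [hupd l ω]
    rw [add_sub_cancel_left, EuclideanSpace.norm_single]
    exact Real.norm_eq_abs _
  -- determination by indices
  have hdet : ∀ l (ω ω' : Ω), (∀ m, m < l → idx m ω = idx m ω') → x l ω = x l ω' := by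
    intro l
    induction l using Nat.strong_induction_on with
    | _ l ihl =>
      match l with
      | 0 => intro ω ω' _; rw [hx0, hx0]
      | Nat.succ l =>
        intro ω ω' hmm
        rw [hxiter, hxiter]
        rw [ihl l (by omega) ω ω' (fun m hm => hmm m (by omega)),
          ihl (k l) (by have := (hk l).1; omega) ω ω' (fun m hm => hmm m (by
            have := (hk l).1; omega)), hmm l (by omega)]
  have hdetbar : ∀ l (ω ω' : Ω), (∀ m, m < l → idx m ω = idx m ω') →
      xbar (l+1) ω = xbar (l+1) ω' := by
    intro l ω ω' hmm
    rw [hxbarEq, hxbarEq, hdet l ω ω' hmm,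
      hdet (k l) ω ω' (fun m hm => hmm m (by have := (hk l).1; omega))]
  -- telescoping gradient bound
  have htel : ∀ (ω : Ω) (p q : ℕ), p ≤ q →
      ‖gradient f (x p ω) - gradient f (x q ω)‖ ≤
      Lres * ∑ l ∈ Finset.Ico p q, ‖x (l+1) ω - x l ω‖ := by
    intro ω p q hpq
    induction q, hpq using Nat.le_induction with
    | base => simp
    | succ q hpq ih =>
      have hstep1 : ‖gradient f (x q ω) - gradient f (x (q+1) ω)‖ ≤
          Lres * ‖x (q+1) ω - x q ω‖ := by
        have hx1 : x (q+1) ω = x q ω +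
            EuclideanSpace.single (idx q ω) ((xbar (q+1) ω - x q ω) (idx q ω)) := hupd q ω
        have h2 := hLres (x q ω) (idx q ω) ((xbar (q+1) ω - x q ω) (idx q ω)) (hxC q ω)
          (by rw [← hx1]; exact hxC (q+1) ω)
        rw [← hx1] at h2
        rw [hstep q ω]
        exact h2
      calc ‖gradient f (x p ω) - gradient f (x (q+1) ω)‖
          ≤ ‖gradient f (x p ω) - gradient f (x q ω)‖ +
            ‖gradient f (x q ω) - gradient f (x (q+1) ω)‖ := by
            have hre : gradient f (x p ω) - gradient f (x (q+1) ω) =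
              (gradient f (x p ω) - gradient f (x q ω)) +
              (gradient f (x q ω) - gradient f (x (q+1) ω)) := by abel
            rw [hre]; exact norm_add_le _ _
        _ ≤ Lres * ∑ l ∈ Finset.Ico p q, ‖x (l+1) ω - x l ω‖ +
            Lres * ‖x (q+1) ω - x q ω‖ := add_le_add ih hstep1
        _ = Lres * ∑ l ∈ Finset.Ico p (q+1), ‖x (l+1) ω - x l ω‖ := by
            rw [Finset.sum_Ico_succ_top hpq]; ring
  -- core per-ω inequality
  have hcore : ∀ (J' : ℕ) (ω : Ω), ‖x J' ω - xbar (J'+1) ω‖ ≤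
      ‖x (J'+1) ω - xbar (J'+2) ω‖ + ‖x (J'+1) ω - x J' ω‖ +
      (γ / Lmax) * (Lres * ∑ l ∈ Finset.Ico (min (k J') (k (J'+1))) (max (k J') (k (J'+1))),
        ‖x (l+1) ω - x l ω‖) := by
    intro J0 ω
    have hα0 : 0 < γ / Lmax := by positivity
    set g1 := gradient f (x (k J0) ω) with hg1
    set g2 := gradient f (x (k (J0+1)) ω) with hg2
    set x1 := x J0 ω with hx1
    set x2 := x (J0+1) ω with hx2
    set A := x1 - (γ/Lmax) • g1 with hA
    set B := x2 - (γ/Lmax) • g1 with hB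
    set B2 := x2 - (γ/Lmax) • g2 with hB2
    have hbar1 : xbar (J0+1) ω = PC A := hxbarEq J0 ω
    have hbar2 : xbar (J0+1+1) ω = PC B2 := hxbarEq (J0+1) ω
    rw [hbar1, hbar2]
    set p := PC A with hp
    set q' := PC B with hq'
    set q := PC B2 with hq
    have hdec : (x1 - p) - (x2 - q) = ((A - p) - (B - q')) + (q - q') := by
      rw [hA, hB]; abel
    have h_IQ : ‖(A - p) - (B - q')‖ ≤ ‖A - B‖ :=
      (aux_nonexp (hPCvar A q' (hPCmem B)) (hPCvar B p (hPCmem A))).2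
    have h_P : ‖q - q'‖ ≤ ‖B - B2‖ := by
      rw [norm_sub_rev]
      exact (aux_nonexp (hPCvar B q (hPCmem B2)) (hPCvar B2 q' (hPCmem B))).1
    have hAB : ‖A - B‖ = ‖x2 - x1‖ := by
      rw [hA, hB, show x1 - (γ/Lmax) • g1 - (x2 - (γ/Lmax) • g1) = x1 - x2 by abel,
        norm_sub_rev]
    have hBB2 : ‖B - B2‖ = (γ/Lmax) * ‖g1 - g2‖ := by
      rw [hB, hB2, show x2 - (γ/Lmax) • g1 - (x2 - (γ/Lmax) • g2) = (γ/Lmax) • (g2 - g1) by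
        rw [smul_sub]; abel, norm_smul, Real.norm_eq_abs, abs_of_pos hα0, norm_sub_rev]
    have hgg : ‖g1 - g2‖ ≤ Lres * ∑ l ∈ Finset.Ico (min (k J0) (k (J0+1)))
        (max (k J0) (k (J0+1))), ‖x (l+1) ω - x l ω‖ := by
      rcases le_total (k J0) (k (J0+1)) with h | h
      · rw [min_eq_left h, max_eq_right h]
        exact htel ω (k J0) (k (J0+1)) h
      · rw [min_eq_right h, max_eq_left h, hg1, hg2, norm_sub_rev]
        exact htel ω (k (J0+1)) (k J0) h
    have htri : ‖x1 - p‖ ≤ ‖x2 - q‖ + ‖(x1 - p) - (x2 - q)‖ := by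
      have hre : x1 - p = (x2 - q) + ((x1 - p) - (x2 - q)) := by abel
      calc ‖x1 - p‖ = ‖(x2 - q) + ((x1 - p) - (x2 - q))‖ := by rw [← hre]
        _ ≤ ‖x2 - q‖ + ‖(x1 - p) - (x2 - q)‖ := norm_add_le _ _
    have htri2 : ‖(x1 - p) - (x2 - q)‖ ≤ ‖(A - p) - (B - q')‖ + ‖q - q'‖ := by
      rw [hdec]; exact norm_add_le _ _
    have hmul : (γ/Lmax) * ‖g1 - g2‖ ≤ (γ/Lmax) * (Lres * ∑ l ∈ Finset.Ico
        (min (k J0) (k (J0+1))) (max (k J0) (k (J0+1))), ‖x (l+1) ω - x l ω‖) :=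
      mul_le_mul_of_nonneg_left hgg (le_of_lt hα0)
    have := hBB2 ▸ h_P
    linarith [h_IQ, hAB ▸ h_IQ]
  -- main induction
  intro j
  induction j using Nat.strong_induction_on with
  | _ j IH =>
  intro hj
  obtain ⟨J', rfl⟩ : ∃ J', j = J' + 1 := ⟨j - 1, by omega⟩
  simp only [Nat.add_sub_cancel]
  set J := J' + 1 with hJdef
  set T : Ω → (Fin J → Fin n) := fun ω m => idx m ω with hTdef
  have hTmeas : Measurable T := measurable_pi_lambda _ (fun m => hidx_meas m)
  have hne : Nonempty (Fin n) := ⟨⟨0, by omega⟩⟩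
  have hatom : ∀ a : Fin J → Fin n, ℙ (T ⁻¹' {a}) = ((n:ℝ≥0∞)⁻¹)^J := by
    intro a
    set b' : ℕ → Fin n := fun m => if h : m < J then a ⟨m, h⟩ else ⟨0, by omega⟩ with hb'
    have hseteq : T ⁻¹' {a} = ⋂ m ∈ Finset.range J, (idx m) ⁻¹' {b' m} := by
      ext ω
      simp only [Set.mem_preimage, Set.mem_singleton_iff, Set.mem_iInter, Finset.mem_range]
      constructor
      · intro h m hm
        rw [hb']
        simp only [hm, dif_pos]
        rw [← h]
      · intro h
        funext m
        have h2 := h m m.isLt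
        rw [hb'] at h2
        simp only [m.isLt, dif_pos] at h2
        rw [show (⟨(m:ℕ), m.isLt⟩ : Fin J) = m from Fin.eta m m.isLt] at h2
        exact h2
    rw [hseteq]
    rw [hidx_indep.meas_biInter (fun m _ => ⟨{b' m}, measurableSet_singleton _, rfl⟩)]
    have hall : ∀ m ∈ Finset.range J, ℙ ((idx m) ⁻¹' {b' m}) = (n:ℝ≥0∞)⁻¹ := by
      intro m _
      exact hidx_unif m (b' m)
    rw [Finset.prod_congr rfl hall, Finset.prod_const, Finset.card_range]
  have hM1 : ∀ G : (Fin J → Fin n) → ℝ, ∫ ω, G (T ω) = ∑ a, ((1:ℝ)/n)^J * G a := by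
    intro G
    have hfun : (fun ω => G (T ω)) =
        fun ω => ∑ a, Set.indicator (T ⁻¹' {a}) (fun _ => G a) ω := by
      funext ω
      rw [Finset.sum_eq_single (T ω)]
      · exact (Set.indicator_of_mem (show ω ∈ T ⁻¹' {T ω} from rfl) (fun _ => G (T ω))).symm
      · intro a _ ha
        apply Set.indicator_of_notMem
        simp only [Set.mem_preimage, Set.mem_singleton_iff]
        exact fun h => ha h.symm
      · intro h
        exact absurd (Finset.mem_univ _) h
    rw [hfun, integral_finset_sum]
    · apply Finset.sum_congr rfl
      intro a _
      rw [integral_indicator_const _ (hTmeas (measurableSet_singleton a)), measureReal_def, hatom a]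
      rw [smul_eq_mul]
      congr 1
      rw [ENNReal.toReal_pow, ENNReal.toReal_inv, ENNReal.toReal_natCast, one_div]
    · intro a _
      exact (integrable_const (G a)).indicator (hTmeas (measurableSet_singleton a))
  have hrep : ∀ a : Fin J → Fin n, ∃ ω, T ω = a := by
    intro a
    by_contra hcon
    push_neg at hcon
    have : T ⁻¹' {a} = ∅ := by
      ext ω; simp only [Set.mem_preimage, Set.mem_singleton_iff, Set.mem_empty_iff_false,
        iff_false]
      exact hcon ω
    have h2 := hatom a
    rw [this, measure_empty] at h2
    have h3 : ((n:ℝ≥0∞)⁻¹)^J ≠ 0 := pow_ne_zero _ (by simp)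
    exact h3 h2.symm
  choose w hw using hrep
  -- factorization through T
  have hfacx : ∀ l, l ≤ J → ∀ ω, x l ω = x l (w (T ω)) := by
    intro l hl ω
    apply hdet
    intro m hm
    have : idx m (w (T ω)) = T (w (T ω)) ⟨m, by omega⟩ := rfl
    rw [this, hw]
  have hfacbar : ∀ l, l ≤ J → ∀ ω, xbar (l+1) ω = xbar (l+1) (w (T ω)) := by
    intro l hl ω
    apply hdetbar
    intro m hm
    have : idx m (w (T ω)) = T (w (T ω)) ⟨m, by omega⟩ := rfl
    rw [this, hw]
  -- the L² vectors
  set Rv : ℕ → EuclideanSpace ℝ (Fin J → Fin n) :=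
    fun l => WithLp.toLp 2 (fun a => ‖x l (w a) - xbar (l+1) (w a)‖ : (Fin J → Fin n) → ℝ) with hRvdef
  set Sv : ℕ → EuclideanSpace ℝ (Fin J → Fin n) :=
    fun l => WithLp.toLp 2 (fun a => ‖x (l+1) (w a) - x l (w a)‖ : (Fin J → Fin n) → ℝ) with hSvdef
  have hP0 : (0:ℝ) < ((1:ℝ)/n)^J := by positivity
  have hRint : ∀ l, l ≤ J → ∫ ω, ‖x l ω - xbar (l+1) ω‖^2 = ((1:ℝ)/n)^J * ‖Rv l‖^2 := by
    intro l hl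
    have heq : ∀ ω : Ω, ‖x l ω - xbar (l+1) ω‖^2 = (fun a => (Rv l a)^2) (T ω) := by
      intro ω
      simp only [hRvdef]
      rw [hfacx l hl ω, hfacbar l hl ω]
    calc ∫ ω, ‖x l ω - xbar (l+1) ω‖^2 = ∫ ω, (fun a => (Rv l a)^2) (T ω) := by
          congr 1; funext ω; exact heq ω
      _ = ∑ a, ((1:ℝ)/n)^J * (Rv l a)^2 := hM1 (fun a => (Rv l a)^2)
      _ = ((1:ℝ)/n)^J * ∑ a, (Rv l a)^2 := by rw [Finset.mul_sum]
      _ = ((1:ℝ)/n)^J * ‖Rv l‖^2 := by rw [euc_norm_sq]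
  have hSnorm : ∀ l, l < J → ‖Sv l‖^2 = (1/(n:ℝ)) * ‖Rv l‖^2 := by
    intro l hl
    have hidxa : ∀ a : Fin J → Fin n, idx l (w a) = a ⟨l, hl⟩ := by
      intro a
      have h0 : idx l (w a) = T (w a) ⟨l, hl⟩ := rfl
      rw [h0, hw]
    set D : (Fin J → Fin n) → Fin n → ℝ := fun a i => (xbar (l+1) (w a) - x l (w a)) i with hD
    have hDdet : ∀ a a' : Fin J → Fin n,
        (∀ m, m ≠ (⟨l, hl⟩ : Fin J) → a m = a' m) → D a = D a' := by
      intro a a' hagree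
      have hidxeq : ∀ m, m < l → idx m (w a) = idx m (w a') := by
        intro m hm
        have hlt : m < J := by omega
        have h1 : idx m (w a) = T (w a) ⟨m, hlt⟩ := rfl
        have h2 : idx m (w a') = T (w a') ⟨m, hlt⟩ := rfl
        rw [h1, h2, hw, hw]
        apply hagree
        intro hcon
        have hval : m = l := by
          have := congrArg Fin.val hcon
          simpa using this
        omega
      rw [hD]
      simp only
      rw [hdet l (w a) (w a') hidxeq, hdetbar l (w a) (w a') hidxeq]
    have hreg := aux_regroup (by omega : 0 < n) (⟨l, hl⟩ : Fin J) D hDdet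
    have hSpt : ∀ a, Sv l a = |D a (a ⟨l, hl⟩)| := by
      intro a
      show ‖x (l+1) (w a) - x l (w a)‖ = _
      rw [hstep l (w a), hidxa a]
    have hRpt : ∀ a, (Rv l a)^2 = ∑ i, (D a i)^2 := by
      intro a
      show ‖x l (w a) - xbar (l+1) (w a)‖^2 = _
      rw [euc_norm_sq]
      apply Finset.sum_congr rfl
      intro i _
      have hflip : (x l (w a) - xbar (l+1) (w a)) i = -(D a i) := by
        rw [hD]
        simp only [PiLp.sub_apply]
        ring
      rw [hflip, neg_sq]
    calc ‖Sv l‖^2 = ∑ a, (Sv l a)^2 := euc_norm_sq _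
      _ = ∑ a, (D a (a ⟨l, hl⟩))^2 := by
          apply Finset.sum_congr rfl
          intro a _
          rw [hSpt a, sq_abs]
      _ = (1/(n:ℝ)) * ∑ a, ∑ i, (D a i)^2 := hreg
      _ = (1/(n:ℝ)) * ∑ a, (Rv l a)^2 := by
          rw [Finset.sum_congr rfl (fun a _ => (hRpt a).symm)]
      _ = (1/(n:ℝ)) * ‖Rv l‖^2 := by rw [← euc_norm_sq]
  have hIH : ∀ l, l < J' → ‖Rv l‖^2 ≤ ρ * ‖Rv (l+1)‖^2 := by
    intro l hl
    have h2 := IH (l+1) (by omega) (by omega)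
    simp only [Nat.add_sub_cancel] at h2
    rw [hRint l (by omega), hRint (l+1) (by omega)] at h2
    have h3 : ((1:ℝ)/n)^J * ‖Rv l‖^2 ≤ ((1:ℝ)/n)^J * (ρ * ‖Rv (l+1)‖^2) := by
      rw [show ((1:ℝ)/n)^J * (ρ * ‖Rv (l+1)‖^2) = ρ * (((1:ℝ)/n)^J * ‖Rv (l+1)‖^2) by ring]
      exact h2
    exact le_of_mul_le_mul_left h3 hP0
  have hchain : ∀ l, l ≤ J' → J' - l ≤ τ → ‖Rv l‖ ≤ Real.sqrt (ρ^τ) * ‖Rv J'‖ := by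
    have hpow : ∀ d l, l + d = J' → ‖Rv l‖^2 ≤ ρ^d * ‖Rv J'‖^2 := by
      intro d
      induction d with
      | zero =>
        intro l hl
        rw [show l = J' by omega]
        simp
      | succ d ih =>
        intro l hl
        have h1 : ‖Rv l‖^2 ≤ ρ * ‖Rv (l+1)‖^2 := hIH l (by omega)
        have h2 : ‖Rv (l+1)‖^2 ≤ ρ^d * ‖Rv J'‖^2 := ih (l+1) (by omega)
        calc ‖Rv l‖^2 ≤ ρ * ‖Rv (l+1)‖^2 := h1
          _ ≤ ρ * (ρ^d * ‖Rv J'‖^2) := mul_le_mul_of_nonneg_left h2 (le_of_lt hρ0)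
          _ = ρ^(d+1) * ‖Rv J'‖^2 := by ring
    intro l hlJ hlτ
    have h3 := hpow (J' - l) l (by omega)
    have h4 : ρ^(J'-l) ≤ ρ^τ := pow_le_pow_right₀ (by linarith) hlτ
    have h5 : ‖Rv l‖^2 ≤ ρ^τ * ‖Rv J'‖^2 :=
      le_trans h3 (mul_le_mul_of_nonneg_right h4 (sq_nonneg _))
    have h6 := Real.sqrt_le_sqrt h5
    rw [Real.sqrt_sq (norm_nonneg _), Real.sqrt_mul (by positivity) _,
      Real.sqrt_sq (norm_nonneg _)] at h6
    exact h6
  -- window bounds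
  set mm := min (k J') (k J) with hmmdef
  set MM := max (k J') (k J) with hMMdef
  have hwin : ∀ l ∈ Finset.Ico mm MM, l ≤ J' ∧ J' - l ≤ τ := by
    intro l hl
    rw [Finset.mem_Ico] at hl
    have h1 := hk J'
    have h2 := hk J
    constructor
    · have : MM ≤ J := by
        rw [hMMdef]; exact max_le (by omega) h2.1
      omega
    · have : J' - τ ≤ mm := by
        rw [hmmdef]
        apply le_min <;> omega
      omega
  have hcard : (Finset.Ico mm MM).card ≤ τ + 1 := by
    rw [Nat.card_Ico]
    have h1 := hk J'
    have h2 := hk J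
    rw [hMMdef, hmmdef]
    rcases le_total (k J') (k J) with h | h
    · rw [max_eq_right h, min_eq_left h]; omega
    · rw [max_eq_left h, min_eq_right h]; omega
  -- Minkowski step
  have hMink : ‖Rv J'‖ ≤ ‖Rv J‖ + ‖Sv J'‖ +
      (γ / Lmax * Lres) * ∑ l ∈ Finset.Ico mm MM, ‖Sv l‖ := by
    have hcc : (0:ℝ) ≤ γ / Lmax * Lres := by positivity
    set Wv : EuclideanSpace ℝ (Fin J → Fin n) :=
      Rv J + Sv J' + (γ / Lmax * Lres) • ∑ l ∈ Finset.Ico mm MM, Sv l with hWv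
    have hptw : ∀ a, |Rv J' a| ≤ Wv a := by
      intro a
      have hc := hcore J' (w a)
      have hWa : Wv a = Rv J a + Sv J' a
          + (γ / Lmax * Lres) * ∑ l ∈ Finset.Ico mm MM, Sv l a := by
        rw [hWv, PiLp.add_apply, PiLp.add_apply, PiLp.smul_apply, pilp_sum_apply, smul_eq_mul]
      have e0 : Rv J' a = ‖x J' (w a) - xbar (J'+1) (w a)‖ := rfl
      have e1 : Rv J a = ‖x (J'+1) (w a) - xbar (J'+1+1) (w a)‖ := rfl
      have e2 : Sv J' a = ‖x (J'+1) (w a) - x J' (w a)‖ := rfl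
      have e3 : ∑ l ∈ Finset.Ico mm MM, Sv l a
          = ∑ l ∈ Finset.Ico (min (k J') (k (J'+1))) (max (k J') (k (J'+1))),
              ‖x (l+1) (w a) - x l (w a)‖ := by
        apply Finset.sum_congr
        · rfl
        · intro l _
          rfl
      rw [hWa, e0, e1, e2, e3, abs_of_nonneg (norm_nonneg _)]
      have hring : (γ/Lmax) * (Lres * ∑ l ∈ Finset.Ico (min (k J') (k (J'+1)))
            (max (k J') (k (J'+1))), ‖x (l+1) (w a) - x l (w a)‖)
          = (γ/Lmax*Lres) * ∑ l ∈ Finset.Ico (min (k J') (k (J'+1)))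
            (max (k J') (k (J'+1))), ‖x (l+1) (w a) - x l (w a)‖ := by ring
      linarith [hc]
    have h1 : ‖Rv J'‖ ≤ ‖Wv‖ := euc_norm_mono _ _ hptw
    have h2 : ‖Wv‖ ≤ ‖Rv J‖ + ‖Sv J'‖ + (γ/Lmax*Lres) * ∑ l ∈ Finset.Ico mm MM, ‖Sv l‖ := by
      have t1 : ‖Wv‖ ≤ ‖Rv J + Sv J'‖ + ‖(γ/Lmax*Lres) • ∑ l ∈ Finset.Ico mm MM, Sv l‖ := by
        rw [hWv]; exact norm_add_le _ _
      have t2 : ‖Rv J + Sv J'‖ ≤ ‖Rv J‖ + ‖Sv J'‖ := norm_add_le _ _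
      have t3 : ‖(γ/Lmax*Lres) • ∑ l ∈ Finset.Ico mm MM, Sv l‖
          ≤ (γ/Lmax*Lres) * ∑ l ∈ Finset.Ico mm MM, ‖Sv l‖ := by
        rw [norm_smul, Real.norm_eq_abs, abs_of_nonneg hcc]
        exact mul_le_mul_of_nonneg_left (norm_sum_le _ _) hcc
      linarith
    linarith
  -- step norms in terms of Rv
  have hSl : ∀ l, l < J → ‖Sv l‖ = Real.sqrt (1/(n:ℝ)) * ‖Rv l‖ := by
    intro l hl
    have h2 := hSnorm l hl
    have h3 : ‖Sv l‖ = Real.sqrt (‖Sv l‖^2) := (Real.sqrt_sq (norm_nonneg _)).symm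
    rw [h3, h2, Real.sqrt_mul (by positivity) _, Real.sqrt_sq (norm_nonneg _)]
  have hsqrt_inv : Real.sqrt (1/(n:ℝ)) = 1 / Real.sqrt n := by
    rw [one_div, one_div, Real.sqrt_inv]
  have hsum_le : ∑ l ∈ Finset.Ico mm MM, ‖Sv l‖ ≤
      ((τ:ℝ)+1) * (Real.sqrt (ρ^τ) * ‖Rv J'‖ / Real.sqrt n) := by
    have hbound : ∀ l ∈ Finset.Ico mm MM,
        ‖Sv l‖ ≤ Real.sqrt (ρ^τ) * ‖Rv J'‖ / Real.sqrt n := by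
      intro l hl
      obtain ⟨hw1, hw2⟩ := hwin l hl
      rw [hSl l (by rw [hJdef]; omega), hsqrt_inv]
      have h3 := hchain l hw1 hw2
      calc (1/Real.sqrt n) * ‖Rv l‖ ≤ (1/Real.sqrt n) * (Real.sqrt (ρ^τ) * ‖Rv J'‖) :=
            mul_le_mul_of_nonneg_left h3 (by positivity)
        _ = Real.sqrt (ρ^τ) * ‖Rv J'‖ / Real.sqrt n := by ring
    calc ∑ l ∈ Finset.Ico mm MM, ‖Sv l‖
        ≤ (Finset.Ico mm MM).card • (Real.sqrt (ρ^τ) * ‖Rv J'‖ / Real.sqrt n) :=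
          Finset.sum_le_card_nsmul _ _ _ hbound
      _ = ((Finset.Ico mm MM).card : ℝ) * (Real.sqrt (ρ^τ) * ‖Rv J'‖ / Real.sqrt n) :=
          nsmul_eq_mul _ _
      _ ≤ ((τ:ℝ)+1) * (Real.sqrt (ρ^τ) * ‖Rv J'‖ / Real.sqrt n) := by
          apply mul_le_mul_of_nonneg_right _ (by positivity)
          have : ((Finset.Ico mm MM).card : ℝ) ≤ ((τ+1 : ℕ) : ℝ) := Nat.cast_le.mpr hcard
          push_cast at this
          linarith
  have hmain : ‖Rv J'‖ ≤ ‖Rv J‖ + (1/Real.sqrt n) * ‖Rv J'‖ +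
      (γ/Lmax*Lres) * (((τ:ℝ)+1) * (Real.sqrt (ρ^τ) * ‖Rv J'‖ / Real.sqrt n)) := by
    have h4 := hSl J' (by rw [hJdef]; omega)
    rw [h4, hsqrt_inv] at hMink
    have h5 := mul_le_mul_of_nonneg_left hsum_le (show (0:ℝ) ≤ γ/Lmax*Lres by positivity)
    linarith
  -- numeric part
  set Bc : ℝ := (γ/Lmax*Lres) * (((τ:ℝ)+1) * (Real.sqrt (ρ^τ) / Real.sqrt n)) with hBcdef
  have hBid : (γ/Lmax*Lres) * (((τ:ℝ)+1) * (Real.sqrt (ρ^τ) * ‖Rv J'‖ / Real.sqrt n))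
      = Bc * ‖Rv J'‖ := by rw [hBcdef]; ring
  have hsρτ : 0 < Real.sqrt (ρ^τ) := Real.sqrt_pos.mpr (by positivity)
  have hτR : (1:ℝ) ≤ (τ:ℝ) := by exact_mod_cast hτ1
  have hBle : Bc ≤ u * (1 - u^2 - b)/2 := by
    have hposW : (0:ℝ) < 1 - u^2 - b := by linarith [hus]
    have hρτ : (0:ℝ) < ρ^τ := by positivity
    set s := Real.sqrt (ρ^τ) with hsdef
    have hs0 : 0 < s := hsρτ
    have hsρτ1 : Real.sqrt ρ ≤ s := by
      rw [hsdef]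
      apply Real.sqrt_le_sqrt
      calc ρ = ρ^1 := (pow_one ρ).symm
        _ ≤ ρ^τ := pow_le_pow_right₀ (by linarith) hτ1
    have hsq : s * s = ρ^τ := Real.mul_self_sqrt (le_of_lt hρτ)
    have h1u2b : 1 - 1/ρ - b = 1 - u^2 - b := by
      rw [hu2, one_div]
    have hγ2' : γ ≤ (1-u^2-b) * Real.sqrt n * Lmax / (4*Lres*(τ:ℝ)*ρ^τ) := by
      rw [← h1u2b]
      exact hγ2
    have hBmul : Bc = γ * ((Lres/Lmax) * (((τ:ℝ)+1) * (s/Real.sqrt n))) := by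
      rw [hBcdef]; ring
    have hcoef : (0:ℝ) ≤ (Lres/Lmax) * (((τ:ℝ)+1) * (s/Real.sqrt n)) := by positivity
    have hB1 : Bc ≤ ((1-u^2-b) * Real.sqrt n * Lmax / (4*Lres*(τ:ℝ)*ρ^τ)) *
        ((Lres/Lmax) * (((τ:ℝ)+1) * (s/Real.sqrt n))) := by
      rw [hBmul]
      exact mul_le_mul_of_nonneg_right hγ2' hcoef
    have hτ0 : (0:ℝ) < (τ:ℝ) := by linarith
    have hB2 : ((1-u^2-b) * Real.sqrt n * Lmax / (4*Lres*(τ:ℝ)*ρ^τ)) *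
        ((Lres/Lmax) * (((τ:ℝ)+1) * (s/Real.sqrt n)))
        = (1-u^2-b) * (((τ:ℝ)+1) / (4*(τ:ℝ) * s)) := by
      rw [← hsq]
      field_simp
    have hus1 : 1 ≤ u * s := by
      calc (1:ℝ) = (Real.sqrt ρ)⁻¹ * Real.sqrt ρ := (inv_mul_cancel₀ (ne_of_gt hsρ)).symm
        _ ≤ (Real.sqrt ρ)⁻¹ * s := mul_le_mul_of_nonneg_left hsρτ1 (by positivity)
        _ = u * s := by rw [hudef]
    have hfrac : ((τ:ℝ)+1) / (4*(τ:ℝ)*s) ≤ u/2 := by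
      rw [div_le_iff₀ (by positivity)]
      have hm := mul_le_mul_of_nonneg_left hus1 (show (0:ℝ) ≤ 2*(τ:ℝ) by linarith)
      have hid : 2*(τ:ℝ)*(u*s) = u/2*(4*(τ:ℝ)*s) := by ring
      rw [mul_one] at hm
      linarith
    calc Bc ≤ (1-u^2-b) * (((τ:ℝ)+1) / (4*(τ:ℝ)*s)) := by rw [← hB2]; exact hB1
      _ ≤ (1-u^2-b) * (u/2) := mul_le_mul_of_nonneg_left hfrac (le_of_lt hposW)
      _ = u * (1-u^2-b)/2 := by ring
  have hnum : u ≤ 1 - b/2 - Bc := aux_num hb0 hb1 hu0 hu1 hus hBle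
  have hb2 : (1:ℝ)/Real.sqrt n = b/2 := by rw [hbdef]; ring
  have hq : u * ‖Rv J'‖ ≤ ‖Rv J‖ := by
    have h6 := mul_le_mul_of_nonneg_right hnum (norm_nonneg (Rv J'))
    rw [hb2] at hmain
    nlinarith [hmain, hBid]
  have hfin : ‖Rv J'‖^2 ≤ ρ * ‖Rv J‖^2 := by
    have h7 : (u*‖Rv J'‖)^2 ≤ ‖Rv J‖^2 := by
      nlinarith [hq, mul_nonneg (le_of_lt hu0) (norm_nonneg (Rv J')), norm_nonneg (Rv J)]
    have h9 : ρ * u^2 = 1 := by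
      rw [hu2]
      field_simp
    have h10 : ρ * (u*‖Rv J'‖)^2 = ‖Rv J'‖^2 := by
      rw [mul_pow, ← mul_assoc, h9, one_mul]
    calc ‖Rv J'‖^2 = ρ * (u*‖Rv J'‖)^2 := h10.symm
      _ ≤ ρ * ‖Rv J‖^2 := mul_le_mul_of_nonneg_left h7 (le_of_lt hρ0)
  have hgoal : ∫ ω, ‖x J' ω - xbar (J'+1) ω‖^2
      ≤ ρ * ∫ ω, ‖x (J'+1) ω - xbar (J'+1+1) ω‖^2 := by
    have hRvJ : Rv (J'+1) = Rv J := rfl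
    rw [hRint J' (by rw [hJdef]; omega), hRint (J'+1) (le_of_eq hJdef.symm), hRvJ]
    calc ((1:ℝ)/n)^J * ‖Rv J'‖^2 ≤ ((1:ℝ)/n)^J * (ρ * ‖Rv J‖^2) :=
          mul_le_mul_of_nonneg_left hfin (le_of_lt hP0)
      _ = ρ * (((1:ℝ)/n)^J * ‖Rv J‖^2) := by ring
  exact hgoal
end

section
/- Let f : ℝ^n → ℝ be a convex continuously differentiable function whose set S of minimizers is nonempty, with optimal value f*, and suppose f is essentially strongly convex with parameter l > 0, i.e., f(x) − f(y) ≥ ⟨∇f(y), x − y⟩ + (l/2)‖x − y‖² for all x, y with P_S(x) = P_S(y). Then for every x ∈ ℝ^n, ‖∇f(x)‖² ≥ 2l·(f(x) − f*). -/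
open MeasureTheory ProbabilityTheory Real ENNReal

theorem grad_sq_ge_two_l_gap
    {n : ℕ}
    (f : EuclideanSpace ℝ (Fin n) → ℝ)
    (hf_conv : ConvexOn ℝ Set.univ f)
    (hf_smooth : ContDiff ℝ 1 f)
    (S : Set (EuclideanSpace ℝ (Fin n)))
    (hS : S = {z | ∀ y, f z ≤ f y}) (hS_ne : S.Nonempty) (hS_closed : IsClosed S)
    (fstar : ℝ) (hfstar : ∀ z ∈ S, f z = fstar)
    (PS : EuclideanSpace ℝ (Fin n) → EuclideanSpace ℝ (Fin n))
    (hPS : ∀ z, PS z ∈ S ∧ ∀ y ∈ S, ‖z - PS z‖ ≤ ‖z - y‖)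
    (l : ℝ) (hl : 0 < l)
    (hesc : ∀ z y, PS z = PS y →
      f z - f y ≥ (inner ℝ (gradient f y) (z - y) : ℝ) + l / 2 * ‖z - y‖ ^ 2) :
    ∀ z : EuclideanSpace ℝ (Fin n),
      ‖gradient f z‖ ^ 2 ≥ 2 * l * (f z - fstar) := by
  intro z
  -- projection of a point of S is itself
  have hfix : ∀ w ∈ S, PS w = w := by
    intro w hw
    have h := (hPS w).2 w hw
    simp only [sub_self, norm_zero] at h
    have : ‖w - PS w‖ = 0 := le_antisymm h (norm_nonneg _)
    have := norm_sub_eq_zero_iff.mp this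
    exact this.symm
  have hPSz : PS z ∈ S := (hPS z).1
  have hkey := hesc (PS z) z (by rw [hfix (PS z) hPSz])
  have hfs : f (PS z) = fstar := hfstar _ hPSz
  set g := gradient f z with hg
  set b := ‖PS z - z‖ with hb
  have hcs : (inner ℝ g (PS z - z) : ℝ) ≥ -(‖g‖ * b) := by
    have := abs_real_inner_le_norm g (PS z - z)
    have h1 := neg_abs_le (inner ℝ g (PS z - z) : ℝ)
    nlinarith [this, h1]
  have hb0 : 0 ≤ b := norm_nonneg _
  have hineq : fstar - f z ≥ -(‖g‖ * b) + l / 2 * b ^ 2 := by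
    calc fstar - f z = f (PS z) - f z := by rw [hfs]
    _ ≥ (inner ℝ g (PS z - z) : ℝ) + l / 2 * ‖PS z - z‖ ^ 2 := hkey
    _ ≥ -(‖g‖ * b) + l / 2 * b ^ 2 := by rw [← hb]; linarith
  nlinarith [sq_nonneg (‖g‖ - l * b), norm_nonneg g]
end

section
/- Let A be an m×n random matrix whose entries are i.i.d. standard Gaussian N(0,1) random variables, and let A_{·i} denote its i-th column. Then for every i = 1,…,n, E(‖AᵀA_{·i}‖₂) ≤ m + √((n−1)·m). -/
open MeasureTheory ProbabilityTheory Real ENNReal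

noncomputable def gpdfNN : ℝ → NNReal :=
  fun x => ⟨gaussianPDFReal 0 1 x, gaussianPDFReal_nonneg 0 1 x⟩

lemma gauss_integral_eq (g : ℝ → ℝ) :
    ∫ x, g x ∂(gaussianReal 0 1) = ∫ x, gaussianPDFReal 0 1 x * g x := by
  rw [gaussianReal_of_var_ne_zero _ one_ne_zero]
  have h : gaussianPDF 0 1 = fun x => ((gpdfNN x : NNReal) : ENNReal) := by
    ext x
    rw [gaussianPDF_def]
    simp only [ENNReal.ofReal, gpdfNN]
    congr 1
    simp [Real.toNNReal, max_eq_left (gaussianPDFReal_nonneg 0 1 x)]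
    rfl
  rw [h, integral_withDensity_eq_integral_smul]
  · apply integral_congr_ae (ae_of_all _ fun x => ?_)
    simp [NNReal.smul_def, gpdfNN, smul_eq_mul]
    rfl
  · exact (measurable_gaussianPDFReal 0 1).subtype_mk

lemma gauss_integrable_iff (g : ℝ → ℝ) :
    Integrable g (gaussianReal 0 1) ↔
      Integrable (fun x => g x * gaussianPDFReal 0 1 x) volume := by
  rw [gaussianReal_of_var_ne_zero _ one_ne_zero]
  rw [integrable_withDensity_iff (measurable_gaussianPDF 0 1)
    (ae_of_all _ fun x => ENNReal.ofReal_lt_top)]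
  constructor <;> intro h <;> refine h.congr (ae_of_all _ fun x => ?_) <;>
    simp [gaussianPDF_def, ENNReal.toReal_ofReal (gaussianPDFReal_nonneg 0 1 x)]

lemma gpdf_eq (x : ℝ) :
    gaussianPDFReal 0 1 x = (Real.sqrt (2 * π))⁻¹ * rexp (-(1/2) * x ^ 2) := by
  unfold gaussianPDFReal
  congr 1
  · norm_num
  · congr 1
    push_cast
    ring

lemma gauss_integrable_sq : Integrable (fun x : ℝ => x ^ 2) (gaussianReal 0 1) := by
  rw [gauss_integrable_iff]
  have h := (integrable_rpow_mul_exp_neg_mul_sq (b := 1/2) (by norm_num)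
    (s := ((2:ℕ):ℝ)) (by norm_num)).const_mul (Real.sqrt (2 * π))⁻¹
  refine h.congr (ae_of_all _ fun x => ?_)
  simp only [gpdf_eq, Real.rpow_natCast]
  ring

lemma gauss_integrable_id : Integrable (fun x : ℝ => x) (gaussianReal 0 1) := by
  rw [gauss_integrable_iff]
  have h := (integrable_mul_exp_neg_mul_sq (b := 1/2) (by norm_num)).const_mul
    (Real.sqrt (2 * π))⁻¹
  refine h.congr (ae_of_all _ fun x => ?_)
  simp only [gpdf_eq]
  ring

lemma gauss_mean : ∫ x, x ∂(gaussianReal 0 1) = 0 := by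
  have hmap : (gaussianReal 0 1).map (fun x => (-1 : ℝ) * x) = gaussianReal 0 1 := by
    have := gaussianReal_map_const_mul (μ := 0) (v := 1) (-1 : ℝ)
    simp only [mul_zero] at this
    convert this using 3
    ext
    norm_num
  have h1 : ∫ x, x ∂((gaussianReal 0 1).map (fun x => (-1:ℝ) * x))
      = ∫ x, (-1 : ℝ) * x ∂(gaussianReal 0 1) :=
    integral_map (φ := fun x => (-1:ℝ) * x) (f := fun x : ℝ => x)
      (measurable_id.const_mul _).aemeasurable aestronglyMeasurable_id
  rw [hmap] at h1
  have h2 : ∫ x, (-1 : ℝ) * x ∂(gaussianReal 0 1) = - ∫ x, x ∂(gaussianReal 0 1) := by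
    simp only [neg_one_mul]
    exact integral_neg _
  rw [h2] at h1
  linarith

lemma gauss_sq : ∫ x, x ^ 2 ∂(gaussianReal 0 1) = 1 := by
  rw [gauss_integral_eq]
  have hcongr : ∀ x : ℝ, gaussianPDFReal 0 1 x * x ^ 2
      = (Real.sqrt (2 * π))⁻¹ * (|x| ^ 2 * rexp (-(1/2) * |x| ^ 2)) := by
    intro x
    rw [gpdf_eq, sq_abs]
    ring
  rw [integral_congr_ae (ae_of_all _ hcongr), integral_const_mul]
  have habs : ∫ x : ℝ, |x| ^ 2 * rexp (-(1/2) * |x| ^ 2)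
      = 2 * ∫ x in Set.Ioi (0:ℝ), x ^ 2 * rexp (-(1/2) * x ^ 2) :=
    integral_comp_abs (f := fun x => x ^ 2 * rexp (-(1/2) * x ^ 2))
  rw [habs]
  have hIoi : ∫ x in Set.Ioi (0:ℝ), x ^ 2 * rexp (-(1/2) * x ^ 2)
      = (1/2 : ℝ) ^ (-(((2:ℝ) + 1)) / 2) * (1 / 2) * Real.Gamma (((2:ℝ) + 1) / 2) := by
    rw [← integral_rpow_mul_exp_neg_mul_rpow (p := 2) (q := 2) (by norm_num) (by norm_num)
      (by norm_num : (0:ℝ) < 1/2)]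
    refine setIntegral_congr_fun measurableSet_Ioi fun x _ => ?_
    have hx2 : x ^ (2:ℝ) = x ^ 2 := by
      rw [show (2:ℝ) = ((2:ℕ):ℝ) by norm_num, Real.rpow_natCast]
    rw [hx2]
  rw [hIoi]
  have hG : Real.Gamma (((2:ℝ) + 1) / 2) = Real.sqrt π / 2 := by
    rw [show ((2:ℝ) + 1) / 2 = 1/2 + 1 by norm_num, Real.Gamma_add_one (by norm_num),
      Real.Gamma_one_half_eq]
    ring
  have hpow : (1/2 : ℝ) ^ (-(((2:ℝ) + 1)) / 2) = 2 * Real.sqrt 2 := by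
    rw [show (-(((2:ℝ) + 1)) / 2) = -(3/2) by norm_num, one_div,
      Real.inv_rpow (by norm_num), Real.rpow_neg (by norm_num), inv_inv,
      show (3/2 : ℝ) = 1 + 1/2 by norm_num, Real.rpow_add (by norm_num),
      Real.rpow_one, ← Real.sqrt_eq_rpow]
  rw [hG, hpow, Real.sqrt_mul (by norm_num : (0:ℝ) ≤ 2) π]
  have hs2 : (0:ℝ) < Real.sqrt 2 := Real.sqrt_pos.mpr (by norm_num)
  have hsπ : (0:ℝ) < Real.sqrt π := Real.sqrt_pos.mpr Real.pi_pos
  field_simp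

lemma rv_integrable {Ω : Type} [MeasureSpace Ω] {X : Ω → ℝ} (hX : Measurable X)
    (hd : Measure.map X ℙ = gaussianReal 0 1) : Integrable X ℙ := by
  have h := gauss_integrable_id
  rw [← hd] at h
  exact (integrable_map_measure aestronglyMeasurable_id hX.aemeasurable).mp h

lemma rv_sq_integrable {Ω : Type} [MeasureSpace Ω] {X : Ω → ℝ} (hX : Measurable X)
    (hd : Measure.map X ℙ = gaussianReal 0 1) : Integrable (fun ω => X ω ^ 2) ℙ := by
  have h := gauss_integrable_sq
  rw [← hd] at h
  exact (integrable_map_measure (measurable_id.pow_const 2).aestronglyMeasurable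
    hX.aemeasurable).mp h

lemma rv_mean {Ω : Type} [MeasureSpace Ω] {X : Ω → ℝ} (hX : Measurable X)
    (hd : Measure.map X ℙ = gaussianReal 0 1) : ∫ ω, X ω ∂ℙ = 0 := by
  have h := integral_map (μ := (ℙ : Measure Ω)) (φ := X) (f := fun x : ℝ => x) hX.aemeasurable
    aestronglyMeasurable_id
  rw [hd, gauss_mean] at h
  exact h.symm

lemma rv_sq_mean {Ω : Type} [MeasureSpace Ω] {X : Ω → ℝ} (hX : Measurable X)
    (hd : Measure.map X ℙ = gaussianReal 0 1) : ∫ ω, X ω ^ 2 ∂ℙ = 1 := by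
  have h := integral_map (μ := (ℙ : Measure Ω)) (φ := X) (f := fun x : ℝ => x ^ 2) hX.aemeasurable
    (measurable_id.pow_const 2).aestronglyMeasurable
  rw [hd, gauss_sq] at h
  exact h.symm

lemma sqrt_le_one_add_self {x : ℝ} (hx : 0 ≤ x) : Real.sqrt x ≤ 1 + x := by
  rw [Real.sqrt_le_iff]
  constructor
  · linarith
  · nlinarith

lemma sqrt_add_le {a b : ℝ} (ha : 0 ≤ a) (hb : 0 ≤ b) :
    Real.sqrt (a + b) ≤ Real.sqrt a + Real.sqrt b := by
  rw [Real.sqrt_le_iff]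
  refine ⟨by positivity, ?_⟩
  have h1 : Real.sqrt a ^ 2 = a := Real.sq_sqrt ha
  have h2 : Real.sqrt b ^ 2 = b := Real.sq_sqrt hb
  nlinarith [Real.sqrt_nonneg a, Real.sqrt_nonneg b]

theorem gaussian_matrix_column_norm_expectation
    {m n : ℕ}
    {Ω : Type} [MeasureSpace Ω] [IsProbabilityMeasure (ℙ : Measure Ω)]
    (A : Ω → Matrix (Fin m) (Fin n) ℝ)
    (hmeas : ∀ i j, Measurable fun ω => A ω i j)
    (hdist : ∀ i j, Measure.map (fun ω => A ω i j) ℙ = gaussianReal 0 1)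
    (hindep : iIndepFun
      (fun (p : Fin m × Fin n) ω => A ω p.1 p.2) ℙ) :
    ∀ i : Fin n,
      (∫ ω, Real.sqrt (∑ j, (∑ r, A ω r j * A ω r i) ^ 2)) ≤
        m + Real.sqrt (((n : ℝ) - 1) * m) := by
  intro i
  have hXm : ∀ p : Fin m × Fin n, Measurable (fun ω => A ω p.1 p.2) := fun p => hmeas p.1 p.2
  have hInt : ∀ p : Fin m × Fin n, Integrable (fun ω => A ω p.1 p.2) ℙ :=
    fun p => rv_integrable (hXm p) (hdist p.1 p.2)
  have hIntSq : ∀ p : Fin m × Fin n, Integrable (fun ω => A ω p.1 p.2 ^ 2) ℙ :=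
    fun p => rv_sq_integrable (hXm p) (hdist p.1 p.2)
  have hE : ∀ p : Fin m × Fin n, ∫ ω, A ω p.1 p.2 ∂ℙ = 0 :=
    fun p => rv_mean (hXm p) (hdist p.1 p.2)
  have hE2 : ∀ p : Fin m × Fin n, ∫ ω, A ω p.1 p.2 ^ 2 ∂ℙ = 1 :=
    fun p => rv_sq_mean (hXm p) (hdist p.1 p.2)
  have hcolInt : ∀ (j : Fin n) (r s : Fin m),
      Integrable (fun ω => A ω r j * A ω s j) ℙ := by
    intro j r s
    by_cases h : r = s
    · subst h
      exact (hIntSq (r, j)).congr (ae_of_all _ fun ω => sq _)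
    · have hne : ((r, j) : Fin m × Fin n) ≠ (s, j) := by simp [Prod.ext_iff, h]
      exact (hindep.indepFun hne).integrable_mul (hInt (r, j)) (hInt (s, j))
  have hcolE : ∀ (j : Fin n) (r s : Fin m),
      ∫ ω, A ω r j * A ω s j ∂ℙ = if r = s then 1 else 0 := by
    intro j r s
    by_cases h : r = s
    · subst h
      simp only [if_pos rfl]
      rw [← hE2 (r, j)]
      exact integral_congr_ae (ae_of_all _ fun ω => (sq _).symm)
    · simp only [if_neg h]
      have hne : ((r, j) : Fin m × Fin n) ≠ (s, j) := by simp [Prod.ext_iff, h]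
      have hmul := (hindep.indepFun hne).integral_mul_eq_mul_integral (hInt (r, j)).aestronglyMeasurable (hInt (s, j)).aestronglyMeasurable
      calc ∫ ω, A ω r j * A ω s j ∂ℙ
          = (∫ ω, A ω r j ∂ℙ) * ∫ ω, A ω s j ∂ℙ := hmul
        _ = 0 := by rw [hE (r, j), hE (s, j)]; ring
  have h4 : ∀ (j : Fin n), j ≠ i → ∀ (r s : Fin m),
      Integrable (fun ω => (A ω r j * A ω s j) * (A ω r i * A ω s i)) ℙ ∧
      ∫ ω, (A ω r j * A ω s j) * (A ω r i * A ω s i) ∂ℙ = if r = s then 1 else 0 := by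
    intro j hj r s
    have h1 : ((r, j) : Fin m × Fin n) ≠ (r, i) := by simp [Prod.ext_iff, hj]
    have h2 : ((r, j) : Fin m × Fin n) ≠ (s, i) := by simp [Prod.ext_iff, hj]
    have h3 : ((s, j) : Fin m × Fin n) ≠ (r, i) := by simp [Prod.ext_iff, hj]
    have h4' : ((s, j) : Fin m × Fin n) ≠ (s, i) := by simp [Prod.ext_iff, hj]
    have hind := hindep.indepFun_mul_mul hXm (r, j) (s, j) (r, i) (s, i) h1 h2 h3 h4'
    refine ⟨hind.integrable_mul (hcolInt j r s) (hcolInt i r s), ?_⟩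
    have hmul := hind.integral_mul_eq_mul_integral (hcolInt j r s).aestronglyMeasurable (hcolInt i r s).aestronglyMeasurable
    calc ∫ ω, (A ω r j * A ω s j) * (A ω r i * A ω s i) ∂ℙ
        = (∫ ω, A ω r j * A ω s j ∂ℙ) * ∫ ω, A ω r i * A ω s i ∂ℙ := hmul
      _ = _ := by rw [hcolE j r s, hcolE i r s]; by_cases h : r = s <;> simp [h]
  set S : Fin n → Ω → ℝ := fun j ω => ∑ r, A ω r j * A ω r i with hSdef
  have hSmeas : ∀ j, Measurable (S j) := fun j =>
    Finset.measurable_sum _ fun r _ => (hmeas r j).mul (hmeas r i)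
  have hexp : ∀ (j : Fin n) (ω : Ω), S j ω ^ 2
      = ∑ r, ∑ s, (A ω r j * A ω s j) * (A ω r i * A ω s i) := by
    intro j ω
    rw [hSdef, sq, Finset.sum_mul_sum]
    exact Finset.sum_congr rfl fun r _ => Finset.sum_congr rfl fun s _ => by ring
  have hS2Int : ∀ (j : Fin n), j ≠ i → Integrable (fun ω => S j ω ^ 2) ℙ := by
    intro j hj
    have h' : Integrable (fun ω => ∑ r, ∑ s, (A ω r j * A ω s j) * (A ω r i * A ω s i)) ℙ :=
      integrable_finset_sum _ fun r _ => integrable_finset_sum _ fun s _ => (h4 j hj r s).1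
    exact h'.congr (ae_of_all _ fun ω => (hexp j ω).symm)
  have hS2E : ∀ (j : Fin n), j ≠ i → ∫ ω, S j ω ^ 2 ∂ℙ = m := by
    intro j hj
    calc ∫ ω, S j ω ^ 2 ∂ℙ
        = ∫ ω, ∑ r, ∑ s, (A ω r j * A ω s j) * (A ω r i * A ω s i) ∂ℙ :=
          integral_congr_ae (ae_of_all _ fun ω => hexp j ω)
      _ = ∑ r, ∫ ω, ∑ s, (A ω r j * A ω s j) * (A ω r i * A ω s i) ∂ℙ :=
          integral_finset_sum _ fun r _ =>
            integrable_finset_sum _ fun s _ => (h4 j hj r s).1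
      _ = ∑ r, ∑ s, ∫ ω, (A ω r j * A ω s j) * (A ω r i * A ω s i) ∂ℙ :=
          Finset.sum_congr rfl fun r _ => integral_finset_sum _ fun s _ => (h4 j hj r s).1
      _ = ∑ r : Fin m, (1 : ℝ) := Finset.sum_congr rfl fun r _ => by
          rw [Finset.sum_congr rfl fun s _ => (h4 j hj r s).2]
          simp
      _ = m := by simp
  have hSiInt : Integrable (S i) ℙ :=
    integrable_finset_sum _ fun r _ => hcolInt i r r
  have hSiE : ∫ ω, S i ω ∂ℙ = m := by
    calc ∫ ω, S i ω ∂ℙ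
        = ∑ r, ∫ ω, A ω r i * A ω r i ∂ℙ := integral_finset_sum _ fun r _ => hcolInt i r r
      _ = ∑ r : Fin m, (1 : ℝ) := Finset.sum_congr rfl fun r _ => by rw [hcolE i r r]; simp
      _ = m := by simp
  have hSi_nonneg : ∀ ω, 0 ≤ S i ω := fun ω =>
    Finset.sum_nonneg fun r _ => mul_self_nonneg _
  set T : Ω → ℝ := fun ω => ∑ j ∈ Finset.univ.erase i, S j ω ^ 2 with hTdef
  have hTnn : ∀ ω, 0 ≤ T ω := fun ω => Finset.sum_nonneg fun j _ => sq_nonneg _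
  have hTmeas : Measurable T :=
    Finset.measurable_sum _ fun j _ => (hSmeas j).pow_const 2
  have hTInt : Integrable T ℙ := integrable_finset_sum _ fun j hj =>
    hS2Int j (Finset.ne_of_mem_erase hj)
  have hn1 : (1 : ℝ) ≤ n := by exact_mod_cast i.pos
  have hTE : ∫ ω, T ω ∂ℙ = ((n : ℝ) - 1) * m := by
    calc ∫ ω, T ω ∂ℙ
        = ∑ j ∈ Finset.univ.erase i, ∫ ω, S j ω ^ 2 ∂ℙ :=
          integral_finset_sum _ fun j hj => hS2Int j (Finset.ne_of_mem_erase hj)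
      _ = ∑ j ∈ Finset.univ.erase i, (m : ℝ) :=
          Finset.sum_congr rfl fun j hj => hS2E j (Finset.ne_of_mem_erase hj)
      _ = ((n : ℝ) - 1) * m := by
          rw [Finset.sum_const, Finset.card_erase_of_mem (Finset.mem_univ i),
            Finset.card_univ, Fintype.card_fin, nsmul_eq_mul, Nat.cast_sub i.pos,
            Nat.cast_one]
  set g : Ω → ℝ := fun ω => Real.sqrt (T ω) with hgdef
  have hgmeas : Measurable g := Real.continuous_sqrt.measurable.comp hTmeas
  have hgInt : Integrable g ℙ := by
    refine Integrable.mono' ((integrable_const 1).add hTInt) hgmeas.aestronglyMeasurable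
      (ae_of_all _ fun ω => ?_)
    rw [Real.norm_eq_abs, abs_of_nonneg (Real.sqrt_nonneg _)]
    exact sqrt_le_one_add_self (hTnn ω)
  have hgsq : ∀ ω, g ω ^ 2 = T ω := fun ω => Real.sq_sqrt (hTnn ω)
  have hgMem : MemLp g 2 ℙ :=
    (memLp_two_iff_integrable_sq hgmeas.aestronglyMeasurable).mpr
      (hTInt.congr (ae_of_all _ fun ω => (hgsq ω).symm))
  have hvar := variance_nonneg g ℙ
  rw [variance_eq_sub hgMem] at hvar
  have hvar' : 0 ≤ (∫ ω, g ω ^ 2 ∂ℙ) - (∫ ω, g ω ∂ℙ) ^ 2 := hvar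
  have hEg2 : ∫ ω, g ω ^ 2 ∂ℙ = ((n : ℝ) - 1) * m := by
    rw [integral_congr_ae (ae_of_all _ hgsq)]
    exact hTE
  have hEg_nonneg : 0 ≤ ∫ ω, g ω ∂ℙ := integral_nonneg fun ω => Real.sqrt_nonneg _
  have hEg_le : ∫ ω, g ω ∂ℙ ≤ Real.sqrt (((n : ℝ) - 1) * m) := by
    rw [Real.le_sqrt hEg_nonneg (mul_nonneg (by linarith) (Nat.cast_nonneg m))]
    calc (∫ ω, g ω ∂ℙ) ^ 2 ≤ ∫ ω, g ω ^ 2 ∂ℙ := by linarith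
      _ = ((n : ℝ) - 1) * m := hEg2
  have hpoint : ∀ ω, Real.sqrt (∑ j, S j ω ^ 2) ≤ S i ω + g ω := by
    intro ω
    have hsplit : ∑ j, S j ω ^ 2 = S i ω ^ 2 + T ω := by
      rw [hTdef, ← Finset.add_sum_erase _ _ (Finset.mem_univ i)]
    rw [hsplit]
    calc Real.sqrt (S i ω ^ 2 + T ω)
        ≤ Real.sqrt (S i ω ^ 2) + Real.sqrt (T ω) := sqrt_add_le (sq_nonneg _) (hTnn ω)
      _ = S i ω + g ω := by rw [Real.sqrt_sq (hSi_nonneg ω)]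
  have hmain : ∫ ω, Real.sqrt (∑ j, S j ω ^ 2) ∂ℙ ≤ ∫ ω, (S i ω + g ω) ∂ℙ :=
    integral_mono_of_nonneg (ae_of_all _ fun ω => Real.sqrt_nonneg _)
      (hSiInt.add hgInt) (ae_of_all _ hpoint)
  rw [integral_add hSiInt hgInt, hSiE] at hmain
  calc (∫ ω, Real.sqrt (∑ j, (∑ r, A ω r j * A ω r i) ^ 2))
      = ∫ ω, Real.sqrt (∑ j, S j ω ^ 2) ∂ℙ := rfl
    _ ≤ (m : ℝ) + ∫ ω, g ω ∂ℙ := hmain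
    _ ≤ m + Real.sqrt (((n : ℝ) - 1) * m) := by linarith
end
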